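/- arXiv:2411.02101 — 16 statements merged into one kernel-verified Lean document; each statement's English description precedes it below -/
import Mathlib

section
/- Let R ⊆ S be an extension of commutative rings and I an ideal of S whose elements all lie in R (so I is a common ideal of R and S). If the induced extension R/I ⊆ S/I is local (resp. strongly local), then R ⊆ S is local (resp. strongly local). -/
/-- A ring extension `R ⊆ S` is *local* if `U(R) = U(S) ∩ R`:
every element of `R` invertible in `S` has its inverse in `R`. -/
def Subring.IsLocalExt {S : Type*} [CommRing S] (R : Subring S) : Prop :=
  ∀ x y : S, x * y = 1 → x ∈ R → y ∈ R

/-- A ring extension `R ⊆ S` is *strongly local* if `U(R) = U(S)`: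
every unit of `S` lies in `R` together with its inverse. -/
def Subring.IsSLExt {S : Type*} [CommRing S] (R : Subring S) : Prop :=
  ∀ x y : S, x * y = 1 → x ∈ R ∧ y ∈ R

theorem local_and_SL_descend_from_quotient_by_common_ideal
    {S : Type*} [CommRing S] (R : Subring S) (I : Ideal S)
    (hI : ∀ x ∈ I, x ∈ R) :
    ((R.map (Ideal.Quotient.mk I)).IsLocalExt → R.IsLocalExt) ∧
    ((R.map (Ideal.Quotient.mk I)).IsSLExt → R.IsSLExt) := by
  have key : ∀ y : S, Ideal.Quotient.mk I y ∈ R.map (Ideal.Quotient.mk I) → y ∈ R := by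
    intro y hy
    obtain ⟨r, hr, hry⟩ := hy
    have : y - r ∈ I := by
      exact Ideal.Quotient.eq.mp hry.symm
    have := hI _ this
    have : r + (y - r) ∈ R := R.add_mem hr this
    simpa using this
  constructor
  · intro h x y hxy hx
    refine key y (h _ _ ?_ ⟨x, hx, rfl⟩)
    rw [← map_mul, hxy, map_one]
  · intro h x y hxy
    have h2 := h (Ideal.Quotient.mk I x) (Ideal.Quotient.mk I y)
      (by rw [← map_mul, hxy, map_one])
    exact ⟨key x h2.1, key y h2.2⟩
end

section
/- Let I be a semiprime (radical) ideal of a commutative ring R and set R//I := R[X]/(X·I[X]), the quotient of the polynomial ring R[X] by the ideal of all polynomials with zero constant term and all coefficients in I (the product of the principal ideal (X) with the ideal I[X] of polynomials with coefficients in I). Then the canonical ring homomorphism R → R//I is injective, and the extension R ⊆ R//I is strongly local and t-closed; moreover the conductor (R : R//I) := {x ∈ R//I | x·(R//I) ⊆ R} equals I, and if R is reduced then R//I is reduced. -/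
open Polynomial

/-- The canonical ring homomorphism `R → R//I := R[X]/(X·I[X])`. -/
noncomputable def cohnMk {R : Type*} [CommRing R] (I : Ideal R) :
    R →+* Polynomial R ⧸ (Ideal.span {(X : Polynomial R)} * I.map (C : R →+* Polynomial R)) :=
  (Ideal.Quotient.mk _).comp (C : R →+* Polynomial R)

section Aux

variable {R : Type*} [CommRing R]

private lemma memJ_iff (I : Ideal R) (f : R[X]) :
    f ∈ Ideal.span {(X : R[X])} * I.map (C : R →+* R[X]) ↔
      f.coeff 0 = 0 ∧ ∀ n, f.coeff (n + 1) ∈ I := by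
  rw [Ideal.mem_span_singleton_mul]
  constructor
  · rintro ⟨g, hg, rfl⟩
    rw [Ideal.mem_map_C_iff] at hg
    refine ⟨by simp, fun n => ?_⟩
    rw [coeff_X_mul]; exact hg n
  · rintro ⟨h0, h⟩
    refine ⟨f.divX, ?_, ?_⟩
    · rw [Ideal.mem_map_C_iff]
      intro n; rw [coeff_divX]; exact h n
    · conv_rhs => rw [← f.X_mul_divX_add]
      rw [h0, map_zero, add_zero]

private lemma mem_range_iff (I : Ideal R) (f : R[X]) :
    Ideal.Quotient.mk (Ideal.span {(X : R[X])} * I.map (C : R →+* R[X])) f ∈ (cohnMk I).range ↔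
      ∀ n, f.coeff (n + 1) ∈ I := by
  constructor
  · rintro ⟨r, hr⟩
    have hmem : C r - f ∈ Ideal.span {(X : R[X])} * I.map (C : R →+* R[X]) :=
      Ideal.Quotient.eq.mp hr
    intro n
    have := ((memJ_iff I _).mp hmem).2 n
    rw [coeff_sub, coeff_C] at this
    simpa using I.neg_mem this
  · intro h
    refine ⟨f.coeff 0, Ideal.Quotient.eq.mpr ((memJ_iff I _).mpr ⟨by simp, fun n => ?_⟩)⟩
    rw [coeff_sub, coeff_C]
    simpa using I.neg_mem (h n)

private lemma map_eq_C (p : Ideal R) (g : R[X]) (h : ∀ n, g.coeff (n + 1) ∈ p) :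
    g.map (Ideal.Quotient.mk p) = C (Ideal.Quotient.mk p (g.coeff 0)) := by
  ext m
  cases m with
  | zero => simp [coeff_map]
  | succ m =>
      simp [coeff_map, coeff_C, Ideal.Quotient.eq_zero_iff_mem.mpr (h m)]

private lemma domain_aux {D : Type*} [CommRing D] [IsDomain D] (F : D[X]) (s c d : D)
    (h2 : F ^ 2 - C s * F = C c) (h3 : F ^ 3 - C s * F ^ 2 = C d) (n : ℕ) :
    F.coeff (n + 1) = 0 := by
  by_cases hF : F = 0
  · simp [hF]
  have key : F * C c = C d := by
    have h : F * (F ^ 2 - C s * F) = F ^ 3 - C s * F ^ 2 := by ring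
    rw [h2, h3] at h; exact h
  by_cases hc : c = 0
  · subst hc
    have h0 : F * (F - C s) = 0 := by
      have := h2; rw [map_zero] at this
      calc F * (F - C s) = F ^ 2 - C s * F := by ring
        _ = 0 := this
    rcases mul_eq_zero.mp h0 with h | h
    · exact absurd h hF
    · rw [sub_eq_zero.mp h, coeff_C]; simp
  · have hCc : (C c : D[X]) ≠ 0 := by simpa using hc
    have hdeg : F.natDegree = 0 := by
      have := natDegree_mul hF hCc
      rw [key, natDegree_C, natDegree_C] at this
      omega
    exact coeff_eq_zero_of_natDegree_lt (by omega)

end Aux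

theorem cohn_type_extension_properties {R : Type*} [CommRing R] (I : Ideal R)
    (hI : I.IsRadical) :
    -- the canonical map `R → R//I` is injective
    Function.Injective (cohnMk I) ∧
    -- the extension `R ⊆ R//I` is strongly local: `U(R) = U(R//I)`
    (∀ x y : Polynomial R ⧸ (Ideal.span {(X : Polynomial R)} * I.map (C : R →+* Polynomial R)),
      x * y = 1 → x ∈ (cohnMk I).range ∧ y ∈ (cohnMk I).range) ∧
    -- the extension `R ⊆ R//I` is t-closed
    (∀ b : Polynomial R ⧸ (Ideal.span {(X : Polynomial R)} * I.map (C : R →+* Polynomial R)),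
      (∃ r : R, b ^ 2 - cohnMk I r * b ∈ (cohnMk I).range ∧
        b ^ 3 - cohnMk I r * b ^ 2 ∈ (cohnMk I).range) → b ∈ (cohnMk I).range) ∧
    -- the conductor `(R : R//I)` equals `I`
    {x : Polynomial R ⧸ (Ideal.span {(X : Polynomial R)} * I.map (C : R →+* Polynomial R)) |
      ∀ z, x * z ∈ (cohnMk I).range} = cohnMk I '' (I : Set R) ∧
    -- if `R` is reduced then so is `R//I`
    (IsReduced R →
      IsReduced (Polynomial R ⧸ (Ideal.span {(X : Polynomial R)} * I.map (C : R →+* Polynomial R)))) := by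
  set J := Ideal.span {(X : Polynomial R)} * I.map (C : R →+* Polynomial R) with hJ
  have mk_surj := Ideal.Quotient.mk_surjective (I := J)
  -- key: units
  have unit_aux : ∀ f g : R[X], f * g - 1 ∈ J →
      Ideal.Quotient.mk J f ∈ (cohnMk I).range := by
    intro f g hfg
    rw [mem_range_iff]
    have hmem := (memJ_iff I _).mp hfg
    haveI : IsReduced (R ⧸ I) := (Ideal.isRadical_iff_quotient_reduced I).mp hI
    have hall : ∀ k, (f * g - 1 : R[X]).coeff k ∈ I := by
      intro k
      cases k with
      | zero => rw [hmem.1]; exact I.zero_mem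
      | succ k => exact hmem.2 k
    have hmap : (f * g - 1 : R[X]).map (Ideal.Quotient.mk I) = 0 := by
      ext k
      rw [coeff_map, coeff_zero]
      exact Ideal.Quotient.eq_zero_iff_mem.mpr (hall k)
    have hone : f.map (Ideal.Quotient.mk I) * g.map (Ideal.Quotient.mk I) = 1 := by
      rw [Polynomial.map_sub, Polynomial.map_mul, Polynomial.map_one, sub_eq_zero] at hmap
      exact hmap
    have hu : IsUnit (f.map (Ideal.Quotient.mk I)) := ⟨⟨_, _, hone, by rw [mul_comm]; exact hone⟩, rfl⟩
    have hnil := (Polynomial.isUnit_iff_coeff_isUnit_isNilpotent.mp hu).2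
    intro n
    have := (hnil (n + 1) (Nat.succ_ne_zero n)).eq_zero
    rw [coeff_map] at this
    exact Ideal.Quotient.eq_zero_iff_mem.mp this
  refine ⟨?_, ?_, ?_, ?_, ?_⟩
  · -- injectivity
    intro r s hrs
    have : C r - C s ∈ J := Ideal.Quotient.eq.mp hrs
    have := ((memJ_iff I _).mp this).1
    simpa [sub_eq_zero] using this
  · -- strongly local
    intro x y hxy
    obtain ⟨f, rfl⟩ := mk_surj x
    obtain ⟨g, rfl⟩ := mk_surj y
    have hfg : f * g - 1 ∈ J := by
      rw [← Ideal.Quotient.eq_zero_iff_mem]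
      simpa [map_sub, map_mul] using sub_eq_zero.mpr hxy
    exact ⟨unit_aux f g hfg, unit_aux g f (by rwa [mul_comm])⟩
  · -- t-closed
    rintro b ⟨r, hb2, hb3⟩
    obtain ⟨f, rfl⟩ := mk_surj b
    have e2 : (Ideal.Quotient.mk J f) ^ 2 - cohnMk I r * Ideal.Quotient.mk J f =
        Ideal.Quotient.mk J (f ^ 2 - C r * f) := by simp [cohnMk]; rfl
    have e3 : (Ideal.Quotient.mk J f) ^ 3 - cohnMk I r * (Ideal.Quotient.mk J f) ^ 2 =
        Ideal.Quotient.mk J (f ^ 3 - C r * f ^ 2) := by simp [cohnMk]; rfl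
    rw [e2, mem_range_iff] at hb2
    rw [e3, mem_range_iff] at hb3
    rw [mem_range_iff]
    intro n
    -- reduce to primes above I
    have : f.coeff (n + 1) ∈ I.radical := by
      rw [Ideal.radical_eq_sInf, Ideal.mem_sInf]
      rintro p ⟨hIp, hp⟩
      haveI := hp
      set q := Ideal.Quotient.mk p
      have m2 : (f ^ 2 - C r * f).map q = C (q ((f ^ 2 - C r * f).coeff 0)) :=
        map_eq_C p _ fun m => hIp (hb2 m)
      have m3 : (f ^ 3 - C r * f ^ 2).map q = C (q ((f ^ 3 - C r * f ^ 2).coeff 0)) :=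
        map_eq_C p _ fun m => hIp (hb3 m)
      simp only [Polynomial.map_sub, Polynomial.map_pow, Polynomial.map_mul, Polynomial.map_C] at m2 m3
      have := domain_aux (f.map q) (q r) _ _ m2 m3 n
      rw [coeff_map] at this
      exact Ideal.Quotient.eq_zero_iff_mem.mp this
    exact hI this
  · -- conductor
    ext x
    simp only [Set.mem_setOf_eq, Set.mem_image, SetLike.mem_coe]
    constructor
    · intro h
      obtain ⟨f, rfl⟩ := mk_surj x
      have h1 : ∀ n, f.coeff (n + 1) ∈ I := by
        have := h 1
        rw [mul_one, mem_range_iff] at this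
        exact this
      have h0 : f.coeff 0 ∈ I := by
        have := h (Ideal.Quotient.mk J X)
        rw [← map_mul, mem_range_iff] at this
        have := this 0
        rwa [coeff_mul_X] at this
      refine ⟨f.coeff 0, h0, ?_⟩
      exact Ideal.Quotient.eq.mpr ((memJ_iff I _).mpr
        ⟨by simp, fun n => by rw [coeff_sub, coeff_C]; simpa using I.neg_mem (h1 n)⟩)
    · rintro ⟨a, ha, rfl⟩
      intro z
      obtain ⟨g, rfl⟩ := mk_surj z
      have : cohnMk I a * Ideal.Quotient.mk J g = Ideal.Quotient.mk J (C a * g) := by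
        simp [cohnMk]; rfl
      rw [this, mem_range_iff]
      intro n
      rw [coeff_C_mul]
      exact I.mul_mem_right _ ha
  · -- reduced
    intro hR
    haveI : IsReduced (R ⧸ I) := (Ideal.isRadical_iff_quotient_reduced I).mp hI
    refine ⟨fun x hx => ?_⟩
    obtain ⟨f, rfl⟩ := mk_surj x
    obtain ⟨m, hm⟩ := hx
    rw [← map_pow, Ideal.Quotient.eq_zero_iff_mem] at hm
    have hmem := (memJ_iff I _).mp hm
    rw [Ideal.Quotient.eq_zero_iff_mem]
    refine (memJ_iff I f).mpr ⟨?_, ?_⟩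
    · have h0 : (f.coeff 0) ^ m = 0 := by
        have h := map_pow (constantCoeff (R := R)) f m
        simp only [constantCoeff_apply] at h
        rw [← h, hmem.1]
      exact (IsNilpotent.eq_zero ⟨m, h0⟩)
    · have hall : ∀ k, (f ^ m : R[X]).coeff k ∈ I := by
        intro k
        cases k with
        | zero => rw [hmem.1]; exact I.zero_mem
        | succ k => exact hmem.2 k
      have hmap : (f.map (Ideal.Quotient.mk I)) ^ m = 0 := by
        rw [← Polynomial.map_pow]
        ext k
        rw [coeff_map, coeff_zero]
        exact Ideal.Quotient.eq_zero_iff_mem.mpr (hall k)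
      have hnil : IsNilpotent (f.map (Ideal.Quotient.mk I)) := ⟨m, hmap⟩
      rw [Polynomial.isNilpotent_iff] at hnil
      intro n
      have := (hnil (n + 1)).eq_zero
      rw [coeff_map] at this
      exact Ideal.Quotient.eq_zero_iff_mem.mp this
end

section
/- Let R ⊆ S be an extension of commutative rings. If for every maximal ideal M of R with R_M ≠ S_M (i.e., every M in the maximal support MSupp(S/R) of the R-module S/R) the induced extension of localizations R_M ⊆ S_M is strongly local (resp. local), then R ⊆ S is strongly local (resp. local). -/
/-- A ring homomorphism is *local* if `f x` is a unit exactly when `x` is a unit. -/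
def IsLocalPred {R S : Type*} [CommRing R] [CommRing S] (f : R →+* S) : Prop :=
  ∀ x : R, IsUnit (f x) ↔ IsUnit x

/-- A ring homomorphism is *strongly local* if `f(U(R)) = U(S)`. -/
def IsSLPred {R S : Type*} [CommRing R] [CommRing S] (f : R →+* S) : Prop :=
  f '' {x : R | IsUnit x} = {y : S | IsUnit y}

/-- The complement of a prime ideal, with the primality hypothesis explicit. -/
def primeComplOf {R : Type*} [CommRing R] (M : Ideal R) (hM : M.IsPrime) : Submonoid R :=
  @Ideal.primeCompl R _ M hM

/-- The canonical ring homomorphism `R_M → S_M` induced by a ring extension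
`R ⊆ S` and a prime ideal `M` of `R`, where `S_M` is the localization of `S`
at the multiplicative set `R \ M`. -/
noncomputable def extLocMap {S : Type*} [CommRing S] (R : Subring S) (M : Ideal R)
    (hM : M.IsPrime) :
    Localization (primeComplOf M hM) →+*
      Localization (Submonoid.map (R.subtype : ↥R →+* S) (primeComplOf M hM)) :=
  IsLocalization.map _ (R.subtype) (Submonoid.le_comap_map (primeComplOf M hM))

lemma extLocMap_mk {S : Type*} [CommRing S] (R : Subring S) (M : Ideal R) (hM : M.IsPrime)
    (a : R) (u : primeComplOf M hM) :
    extLocMap R M hM (Localization.mk a u) =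
      Localization.mk (a : S)
        (⟨((u : R) : S), ⟨(u : R), u.2, rfl⟩⟩ :
          Submonoid.map (R.subtype : ↥R →+* S) (primeComplOf M hM)) := by
  rw [Localization.mk_eq_mk', Localization.mk_eq_mk', extLocMap, IsLocalization.map_mk']
  rfl

lemma range_imp {S : Type*} [CommRing S] (R : Subring S) (M : Ideal R) (hM : M.IsPrime)
    (z : S) (h : Localization.mk z 1 ∈ Set.range (extLocMap R M hM)) :
    ∃ t : R, t ∈ primeComplOf M hM ∧ (t : S) * z ∈ R := by
  obtain ⟨α, hα⟩ := h
  have hsur : ∃ (a : R) (u : primeComplOf M hM), Localization.mk a u = α := by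
    induction α using Localization.ind with | _ p => exact ⟨p.1, p.2, rfl⟩
  obtain ⟨a, u, rfl⟩ := hsur
  rw [extLocMap_mk, Localization.mk_eq_mk_iff, Localization.r_iff_exists] at hα
  obtain ⟨c, hc⟩ := hα
  obtain ⟨t, ht, hts⟩ := c.2
  simp only at hc
  refine ⟨t * u, mul_mem ht u.2, ?_⟩
  have : (t : S) * (((u : R) : S) * z) = (t : S) * ((a : R) : S) := by
    rw [← hts] at hc
    simpa using hc.symm
  push_cast
  rw [mul_assoc, this]
  exact mul_mem t.2 a.2

def condIdeal {S : Type*} [CommRing S] (R : Subring S) (z : S) : Ideal R where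
  carrier := {r : R | (r : S) * z ∈ R}
  add_mem' := fun ha hb => by
    simpa [add_mul] using R.add_mem ha hb
  zero_mem' := by simpa using R.zero_mem
  smul_mem' := fun c r hr => by
    simp only [Set.mem_setOf_eq, smul_eq_mul]
    push_cast
    rw [mul_assoc]
    exact mul_mem c.2 hr

lemma mem_condIdeal {S : Type*} [CommRing S] {R : Subring S} {z : S} {r : R} :
    r ∈ condIdeal R z ↔ (r : S) * z ∈ R := Iff.rfl

lemma mk_isUnit {S : Type*} [CommRing S] (R : Subring S) (M : Ideal R) (hM : M.IsPrime)
    {x y : S} (hxy : x * y = 1) :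
    IsUnit (Localization.mk x (1 : Submonoid.map (R.subtype : ↥R →+* S) (primeComplOf M hM))) := by
  refine IsUnit.of_mul_eq_one (a := _) (Localization.mk y 1) ?_
  rw [Localization.mk_mul, hxy, mul_one]
  exact Localization.mk_self 1


theorem SL_and_local_are_local_properties {S : Type*} [CommRing S] (R : Subring S) :
    ((∀ (M : Ideal R) (hM : M.IsMaximal),
        ¬ Function.Surjective (extLocMap R M hM.isPrime) →
          IsSLPred (extLocMap R M hM.isPrime)) → R.IsSLExt) ∧
    ((∀ (M : Ideal R) (hM : M.IsMaximal),
        ¬ Function.Surjective (extLocMap R M hM.isPrime) →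
          IsLocalPred (extLocMap R M hM.isPrime)) → R.IsLocalExt) := by
  constructor
  · intro h x y hxy
    by_contra hcon
    have hI : condIdeal R x ⊓ condIdeal R y ≠ ⊤ := by
      intro htop
      have h1 : (1 : R) ∈ condIdeal R x ⊓ condIdeal R y := htop ▸ Submodule.mem_top
      obtain ⟨hx1, hy1⟩ := Ideal.mem_inf.mp h1
      rw [mem_condIdeal] at hx1 hy1
      simp only [OneMemClass.coe_one, one_mul] at hx1 hy1
      exact hcon ⟨hx1, hy1⟩
    obtain ⟨M, hM, hle⟩ := Ideal.exists_le_maximal _ hI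
    have hrange : ∀ z w : S, z * w = 1 →
        Localization.mk z (1 : Submonoid.map (R.subtype : ↥R →+* S) (primeComplOf M hM.isPrime))
          ∈ Set.range (extLocMap R M hM.isPrime) := by
      intro z w hzw
      by_cases hs : Function.Surjective (extLocMap R M hM.isPrime)
      · exact hs _
      · have hSL := h M hM hs
        have : Localization.mk z 1 ∈ extLocMap R M hM.isPrime '' {u | IsUnit u} := by
          rw [hSL]
          exact mk_isUnit R M hM.isPrime hzw
        obtain ⟨α, -, hα⟩ := this
        exact ⟨α, hα⟩
    obtain ⟨t1, ht1, ht1x⟩ := range_imp R M hM.isPrime x (hrange x y hxy)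
    obtain ⟨t2, ht2, ht2y⟩ := range_imp R M hM.isPrime y (hrange y x (by rwa [mul_comm]))
    have hmem : t1 * t2 ∈ condIdeal R x ⊓ condIdeal R y := by
      rw [Ideal.mem_inf, mem_condIdeal, mem_condIdeal]
      push_cast
      constructor
      · rw [mul_comm (t1 : S), mul_assoc]
        exact mul_mem t2.2 ht1x
      · rw [mul_assoc]
        exact mul_mem t1.2 ht2y
    exact (mul_mem ht1 ht2 : t1 * t2 ∈ primeComplOf M hM.isPrime) (hle hmem)
  · intro h x y hxy hx
    by_contra hcon
    have hI : condIdeal R y ≠ ⊤ := by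
      intro htop
      have h1 : (1 : R) ∈ condIdeal R y := htop ▸ Submodule.mem_top
      rw [mem_condIdeal] at h1
      simp only [OneMemClass.coe_one, one_mul] at h1
      exact hcon h1
    obtain ⟨M, hM, hle⟩ := Ideal.exists_le_maximal _ hI
    have hrange : Localization.mk y
        (1 : Submonoid.map (R.subtype : ↥R →+* S) (primeComplOf M hM.isPrime))
          ∈ Set.range (extLocMap R M hM.isPrime) := by
      by_cases hs : Function.Surjective (extLocMap R M hM.isPrime)
      · exact hs _
      · have hloc := h M hM hs
        set x' : R := ⟨x, hx⟩ with hx'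
        have hfx : extLocMap R M hM.isPrime (Localization.mk x' 1) = Localization.mk x 1 := by
          rw [extLocMap_mk]
          congr 1
        have hux : IsUnit (Localization.mk x' (1 : primeComplOf M hM.isPrime)) := by
          rw [← hloc]
          rw [hfx]
          exact mk_isUnit R M hM.isPrime hxy
        obtain ⟨β, hβ⟩ := hux.exists_right_inv
        refine ⟨β, ?_⟩
        have h2 : Localization.mk x 1 * extLocMap R M hM.isPrime β = 1 := by
          rw [← hfx, ← map_mul, hβ, map_one]
        have h3 : Localization.mk x 1 *
            Localization.mk y (1 : Submonoid.map (R.subtype : ↥R →+* S)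
              (primeComplOf M hM.isPrime)) = 1 := by
          rw [Localization.mk_mul, hxy, mul_one]
          exact Localization.mk_self 1
        have hu : IsUnit (Localization.mk x (1 : Submonoid.map (R.subtype : ↥R →+* S)
            (primeComplOf M hM.isPrime))) := IsUnit.of_mul_eq_one (a := _) _ h3
        exact hu.mul_left_cancel (by rw [h2, h3])
    obtain ⟨t, ht, hty⟩ := range_imp R M hM.isPrime y hrange
    exact ht (hle hty)
end

section
/- Let R be a commutative ring and M an R-module, and let R(+)M denote the Nagata idealization (trivial square-zero extension) of M over R. (1) The canonical map R → R(+)M, x ↦ (x,0), is a local morphism, and it is strongly local if and only if M = 0; moreover, for an R-submodule N of M, the induced extension R(+)N ⊆ R(+)M is local, and it is strongly local if and only if N = M. (2) If R ⊆ S is an extension of commutative rings and M is an S-module (hence also an R-module), then R ⊆ S is strongly local if and only if the induced extension R(+)M ⊆ S(+)M is strongly local. -/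
/-- For a submodule `N` of the `R`-module `M`, the Nagata idealization `R(+)N`
viewed as a subring of `R(+)M`. -/
def idealizationSubring {R M : Type*} [CommRing R] [AddCommGroup M] [Module R M]
    [Module Rᵐᵒᵖ M] [IsCentralScalar R M] (N : Submodule R M) :
    Subring (TrivSqZeroExt R M) where
  carrier := {p | p.snd ∈ N}
  mul_mem' := by
    intro a b ha hb
    simp only [Set.mem_setOf_eq, TrivSqZeroExt.snd_mul, op_smul_eq_smul] at *
    exact N.add_mem (N.smul_mem _ hb) (N.smul_mem _ ha)
  one_mem' := by simp [Set.mem_setOf_eq, TrivSqZeroExt.snd_one]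
  add_mem' := by
    intro a b ha hb
    simp only [Set.mem_setOf_eq, TrivSqZeroExt.snd_add] at *
    exact N.add_mem ha hb
  zero_mem' := by simp [Set.mem_setOf_eq]
  neg_mem' := by
    intro a ha
    simp only [Set.mem_setOf_eq, TrivSqZeroExt.snd_neg] at *
    exact N.neg_mem ha

/-- For a subring `R` of `S` and an `S`-module `M`, the Nagata idealization `R(+)M`
viewed as a subring of `S(+)M`. -/
def idealizationFstSubring {S M : Type*} [CommRing S] [AddCommGroup M] [Module S M]
    [Module Sᵐᵒᵖ M] [IsCentralScalar S M] (R : Subring S) :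
    Subring (TrivSqZeroExt S M) where
  carrier := {p | p.fst ∈ R}
  mul_mem' := by
    intro a b ha hb
    simp only [Set.mem_setOf_eq, TrivSqZeroExt.fst_mul] at *
    exact R.mul_mem ha hb
  one_mem' := by simpa [Set.mem_setOf_eq] using R.one_mem
  add_mem' := by
    intro a b ha hb
    simp only [Set.mem_setOf_eq, TrivSqZeroExt.fst_add] at *
    exact R.add_mem ha hb
  zero_mem' := by simpa [Set.mem_setOf_eq] using R.zero_mem
  neg_mem' := by
    intro a ha
    simp only [Set.mem_setOf_eq, TrivSqZeroExt.fst_neg] at *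
    exact R.neg_mem ha

theorem nagata_idealization_local_and_SL
    {R M : Type*} [CommRing R] [AddCommGroup M] [Module R M]
    [Module Rᵐᵒᵖ M] [IsCentralScalar R M] (N : Submodule R M)
    {S : Type*} [CommRing S] (R' : Subring S)
    (M' : Type*) [AddCommGroup M'] [Module S M'] [Module Sᵐᵒᵖ M'] [IsCentralScalar S M'] :
    -- (1) the canonical map `R → R(+)M` is local
    IsLocalPred (algebraMap R (TrivSqZeroExt R M)) ∧
    -- it is strongly local iff `M = 0`
    (IsSLPred (algebraMap R (TrivSqZeroExt R M)) ↔ ∀ m : M, m = 0) ∧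
    -- for a submodule `N ⊆ M`, the extension `R(+)N ⊆ R(+)M` is local
    (idealizationSubring N).IsLocalExt ∧
    -- and it is strongly local iff `N = M`
    ((idealizationSubring N).IsSLExt ↔ N = ⊤) ∧
    -- (2) for `R ⊆ S` and an `S`-module `M'`, `R ⊆ S` is SL iff `R(+)M' ⊆ S(+)M'` is SL
    (R'.IsSLExt ↔ (idealizationFstSubring (M := M') R').IsSLExt) := by
  refine ⟨?_, ?_, ?_, ?_, ?_⟩
  · intro x
    rw [TrivSqZeroExt.algebraMap_eq_inl]
    exact TrivSqZeroExt.isUnit_inl_iff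
  · constructor
    · intro h m
      have hu : IsUnit (TrivSqZeroExt.inl 1 + TrivSqZeroExt.inr m : TrivSqZeroExt R M) := by
        rw [TrivSqZeroExt.isUnit_iff_isUnit_fst]
        simp
      rw [IsSLPred] at h
      have : (TrivSqZeroExt.inl 1 + TrivSqZeroExt.inr m : TrivSqZeroExt R M) ∈
          (algebraMap R (TrivSqZeroExt R M)) '' {x : R | IsUnit x} := by
        rw [h]; exact hu
      obtain ⟨x, -, hx⟩ := this
      have := congrArg TrivSqZeroExt.snd hx
      simpa [TrivSqZeroExt.algebraMap_eq_inl] using this.symm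
    · intro hM
      ext y
      simp only [Set.mem_image, Set.mem_setOf_eq, TrivSqZeroExt.algebraMap_eq_inl]
      constructor
      · rintro ⟨x, hx, rfl⟩
        exact TrivSqZeroExt.isUnit_inl_iff.mpr hx
      · intro hy
        refine ⟨y.fst, ?_, ?_⟩
        · rw [TrivSqZeroExt.isUnit_iff_isUnit_fst] at hy; exact hy
        · ext
          · simp
          · simp [hM y.snd, hM]
  · intro x y hxy hx
    have hx' : x.snd ∈ N := hx
    show y.snd ∈ N
    have h1 : x.fst * y.fst = 1 := by
      simpa using congrArg TrivSqZeroExt.fst hxy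
    have h2 : x.fst • y.snd + y.fst • x.snd = 0 := by
      have := congrArg TrivSqZeroExt.snd hxy
      simpa [TrivSqZeroExt.snd_mul, op_smul_eq_smul] using this
    have : y.snd = y.fst • (-(y.fst • x.snd)) := by
      have : x.fst • y.snd = -(y.fst • x.snd) := by linear_combination (norm := module) h2
      calc y.snd = (y.fst * x.fst) • y.snd := by rw [mul_comm, h1, one_smul]
        _ = y.fst • (x.fst • y.snd) := by rw [mul_smul]
        _ = y.fst • (-(y.fst • x.snd)) := by rw [this]
    rw [this]
    exact N.smul_mem _ (N.neg_mem (N.smul_mem _ hx'))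
  · constructor
    · intro h
      rw [eq_top_iff]
      intro m _
      have : (TrivSqZeroExt.inl 1 + TrivSqZeroExt.inr m : TrivSqZeroExt R M) *
          (TrivSqZeroExt.inl 1 + TrivSqZeroExt.inr (-m)) = 1 := by
        ext <;> simp
      have hm : (TrivSqZeroExt.inl 1 + TrivSqZeroExt.inr m :
          TrivSqZeroExt R M).snd ∈ N := (h _ _ this).1
      simpa using hm
    · rintro rfl
      intro x y _
      exact ⟨trivial, trivial⟩
  · constructor
    · intro h x y hxy
      have h1 : x.fst * y.fst = 1 := by
        simpa using congrArg TrivSqZeroExt.fst hxy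
      exact h _ _ h1
    · intro h s t hst
      have : (TrivSqZeroExt.inl s : TrivSqZeroExt S M') * TrivSqZeroExt.inl t = 1 := by
        rw [← TrivSqZeroExt.inl_mul, hst, TrivSqZeroExt.inl_one]
      exact h _ _ this
end

section
/- Let R ⊆ S be an extension of commutative rings. (1) If R ⊆ S has lying over (every prime ideal of R is the contraction to R of some prime ideal of S), then R ⊆ S is local. (2) If R ⊆ S is a survival extension (IS ≠ S for every proper ideal I of R, where IS is the ideal of S generated by I), then R ⊆ S is local. (3) If the ideals of R are linearly ordered by inclusion, then R ⊆ S is a survival extension if and only if R ⊆ S is local. -/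
private lemma survival_local {S : Type*} [CommRing S] (R : Subring S)
    (hs : ∀ I : Ideal R, I ≠ ⊤ → I.map R.subtype ≠ ⊤) : R.IsLocalExt := by
  intro x y hxy hx
  by_cases h : Ideal.span {(⟨x, hx⟩ : R)} = ⊤
  · rw [Ideal.eq_top_iff_one, Ideal.mem_span_singleton'] at h
    obtain ⟨a, ha⟩ := h
    have h1 : (a : S) * x = 1 := by simpa using Subtype.ext_iff.mp ha
    have : y = (a : S) := by
      calc y = ((a:S) * x) * y := by rw [h1, one_mul]
      _ = (a:S) * (x * y) := by ring
      _ = (a:S) := by rw [hxy, mul_one]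
    rw [this]; exact a.2
  · exfalso
    apply hs _ h
    rw [Ideal.eq_top_iff_one]
    have hx' : x ∈ Ideal.map R.subtype (Ideal.span {(⟨x, hx⟩ : R)}) :=
      Ideal.mem_map_of_mem _ (Ideal.mem_span_singleton_self _)
    have h2 : x * y ∈ Ideal.map R.subtype (Ideal.span {(⟨x, hx⟩ : R)}) :=
      Ideal.mul_mem_right _ _ hx'
    rwa [hxy] at h2

private lemma total_local_survival {S : Type*} [CommRing S] (R : Subring S)
    (htot : ∀ I J : Ideal R, I ≤ J ∨ J ≤ I) (hl : R.IsLocalExt) :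
    ∀ I : Ideal R, I ≠ ⊤ → I.map R.subtype ≠ ⊤ := by
  intro I hI htop
  have key : ∀ z ∈ I.map R.subtype, ∃ a : R, a ∈ I ∧ ∃ s : S, z = (a : S) * s := by
    intro z hz
    rw [Ideal.map] at hz
    refine Submodule.span_induction ?_ ?_ ?_ ?_ hz
    · rintro _ ⟨a, ha, rfl⟩; exact ⟨a, ha, 1, (mul_one _).symm⟩
    · exact ⟨0, I.zero_mem, 0, by simp⟩
    · rintro u v _ _ ⟨a, ha, s, rfl⟩ ⟨b, hb, t, rfl⟩
      rcases htot (Ideal.span {a}) (Ideal.span {b}) with h | h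
      · have hab : a ∈ Ideal.span {b} := h (Ideal.mem_span_singleton_self a)
        rw [Ideal.mem_span_singleton'] at hab
        obtain ⟨r, rfl⟩ := hab
        exact ⟨b, hb, (r : S) * s + t, by push_cast; ring⟩
      · have hba : b ∈ Ideal.span {a} := h (Ideal.mem_span_singleton_self b)
        rw [Ideal.mem_span_singleton'] at hba
        obtain ⟨r, rfl⟩ := hba
        exact ⟨a, ha, s + (r : S) * t, by push_cast; ring⟩
    · rintro c u _ ⟨a, ha, s, rfl⟩
      exact ⟨a, ha, c * s, by rw [smul_eq_mul]; ring⟩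
  have h1 : (1 : S) ∈ I.map R.subtype := by rw [htop]; trivial
  obtain ⟨a, ha, s, hs⟩ := key 1 h1
  have hsR : s ∈ R := hl (a : S) s hs.symm a.2
  have hmem : a * ⟨s, hsR⟩ ∈ I := I.mul_mem_right _ ha
  have heq : a * (⟨s, hsR⟩ : R) = 1 := by
    apply Subtype.ext; push_cast; exact hs.symm
  exact hI (Ideal.eq_top_iff_one _ |>.2 (heq ▸ hmem))

private lemma lo_survival {S : Type*} [CommRing S] (R : Subring S)
    (hlo : ∀ P : Ideal R, P.IsPrime → ∃ Q : Ideal S, Q.IsPrime ∧ Q.comap R.subtype = P) :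
    ∀ I : Ideal R, I ≠ ⊤ → I.map R.subtype ≠ ⊤ := by
  intro I hI
  obtain ⟨M, hM, hIM⟩ := Ideal.exists_le_maximal I hI
  obtain ⟨Q, hQ, hQM⟩ := hlo M hM.isPrime
  have : I.map R.subtype ≤ Q := by
    rw [Ideal.map_le_iff_le_comap, hQM]; exact hIM
  exact fun h => hQ.ne_top (top_le_iff.mp (h ▸ this))

theorem lying_over_or_survival_implies_local {S : Type*} [CommRing S] (R : Subring S) :
    -- (1) lying over implies local
    ((∀ P : Ideal R, P.IsPrime → ∃ Q : Ideal S, Q.IsPrime ∧ Q.comap R.subtype = P) →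
      R.IsLocalExt) ∧
    -- (2) survival implies local
    ((∀ I : Ideal R, I ≠ ⊤ → I.map R.subtype ≠ ⊤) → R.IsLocalExt) ∧
    -- (3) if the ideals of `R` are linearly ordered, survival ↔ local
    ((∀ I J : Ideal R, I ≤ J ∨ J ≤ I) →
      ((∀ I : Ideal R, I ≠ ⊤ → I.map R.subtype ≠ ⊤) ↔ R.IsLocalExt)) := by
  refine ⟨fun hlo => survival_local R (lo_survival R hlo), survival_local R,
    fun htot => ⟨survival_local R, total_local_survival R htot⟩⟩
end

section
/- Let R ⊆ S be an extension of commutative rings. The following are equivalent: (1) R ⊆ S is strongly local; (2) the induced extension of polynomial rings R[X] ⊆ S[X] is strongly local; (3) the extension R + XS[X] ⊆ S[X] is strongly local, where R + XS[X] is the subring of S[X] consisting of the polynomials whose constant coefficient lies in R. Moreover, if these equivalent conditions hold, then Nil(R) = Nil(S), i.e., every nilpotent element of S lies in R. -/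
/-- The subring `R[X]` of `S[X]`: polynomials all of whose coefficients lie in `R`. -/
def polySubring {S : Type*} [CommRing S] (R : Subring S) : Subring (Polynomial S) where
  carrier := {p | ∀ n, p.coeff n ∈ R}
  mul_mem' := by
    intro p q hp hq n
    rw [Polynomial.coeff_mul]
    exact sum_mem fun c _ => R.mul_mem (hp _) (hq _)
  one_mem' := by
    intro n
    rw [Polynomial.coeff_one]
    split
    · exact R.one_mem
    · exact R.zero_mem
  add_mem' := by
    intro p q hp hq n
    rw [Polynomial.coeff_add]
    exact R.add_mem (hp n) (hq n)
  zero_mem' := by intro n; simpa using R.zero_mem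
  neg_mem' := by
    intro p hp n
    rw [Polynomial.coeff_neg]
    exact R.neg_mem (hp n)

/-- The subring `R + X·S[X]` of `S[X]`: polynomials whose constant coefficient lies in `R`. -/
def tailSubring {S : Type*} [CommRing S] (R : Subring S) : Subring (Polynomial S) where
  carrier := {p | p.coeff 0 ∈ R}
  mul_mem' := by
    intro p q hp hq
    simp only [Set.mem_setOf_eq, Polynomial.mul_coeff_zero] at *
    exact R.mul_mem hp hq
  one_mem' := by simpa using R.one_mem
  add_mem' := by
    intro p q hp hq
    simp only [Set.mem_setOf_eq, Polynomial.coeff_add] at *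
    exact R.add_mem hp hq
  zero_mem' := by simpa using R.zero_mem
  neg_mem' := by
    intro p hp
    simp only [Set.mem_setOf_eq, Polynomial.coeff_neg] at *
    exact R.neg_mem hp


lemma nil_mem_of_SL {S : Type*} [CommRing S] {R : Subring S} (h : R.IsSLExt)
    {x : S} (hx : IsNilpotent x) : x ∈ R := by
  obtain ⟨u, hu⟩ := hx.isUnit_one_add
  have h1 : (1 + x) * ↑u⁻¹ = 1 := by rw [← hu]; exact u.mul_inv
  have := (h _ _ h1).1
  have := R.sub_mem this R.one_mem
  simpa using this

theorem SL_iff_SL_polynomials {S : Type*} [CommRing S] (R : Subring S) :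
    -- (1) ↔ (2)
    (R.IsSLExt ↔ (polySubring R).IsSLExt) ∧
    -- (1) ↔ (3)
    (R.IsSLExt ↔ (tailSubring R).IsSLExt) ∧
    -- if these conditions hold then `Nil(R) = Nil(S)`
    (R.IsSLExt → {x : S | IsNilpotent x} = Subtype.val '' {x : ↥R | IsNilpotent x}) := by

  have key : R.IsSLExt → (polySubring R).IsSLExt ∧ (tailSubring R).IsSLExt := by
    intro h
    constructor <;> intro p q hpq
    · have hu : IsUnit p := IsUnit.of_mul_eq_one _ hpq
      have hv : IsUnit q := IsUnit.of_mul_eq_one _ (by rw [mul_comm]; exact hpq)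
      rw [Polynomial.isUnit_iff_coeff_isUnit_isNilpotent] at hu hv
      have h0 : p.coeff 0 * q.coeff 0 = 1 := by
        rw [← Polynomial.mul_coeff_zero, hpq, Polynomial.coeff_one]; simp
      obtain ⟨hp0, hq0⟩ := h _ _ h0
      constructor <;> intro n
      · rcases Nat.eq_zero_or_pos n with rfl | hn
        · exact hp0
        · exact nil_mem_of_SL h (hu.2 n hn.ne')
      · rcases Nat.eq_zero_or_pos n with rfl | hn
        · exact hq0
        · exact nil_mem_of_SL h (hv.2 n hn.ne')
    · have h0 : p.coeff 0 * q.coeff 0 = 1 := by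
        rw [← Polynomial.mul_coeff_zero, hpq, Polynomial.coeff_one]; simp
      exact h _ _ h0
  have back1 : (polySubring R).IsSLExt → R.IsSLExt := by
    intro h x y hxy
    have : (Polynomial.C x) * (Polynomial.C y) = 1 := by
      rw [← Polynomial.C_mul, hxy, Polynomial.C_1]
    obtain ⟨h1, h2⟩ := h _ _ this
    have := h1 0; have := h2 0
    simp_all [Polynomial.coeff_C]
  have back2 : (tailSubring R).IsSLExt → R.IsSLExt := by
    intro h x y hxy
    have : (Polynomial.C x) * (Polynomial.C y) = 1 := by
      rw [← Polynomial.C_mul, hxy, Polynomial.C_1]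
    obtain ⟨h1, h2⟩ := h _ _ this
    have e1 : (Polynomial.C x).coeff 0 ∈ R := h1
    have e2 : (Polynomial.C y).coeff 0 ∈ R := h2
    simp only [Polynomial.coeff_C_zero] at e1 e2
    exact ⟨e1, e2⟩
  refine ⟨⟨fun h => (key h).1, back1⟩, ⟨fun h => (key h).2, back2⟩, fun h => ?_⟩
  ext x
  simp only [Set.mem_setOf_eq, Set.mem_image]
  constructor
  · intro hx
    exact ⟨⟨x, nil_mem_of_SL h hx⟩, by
      obtain ⟨n, hn⟩ := hx
      exact ⟨⟨n, Subtype.ext (by simpa using hn)⟩, rfl⟩⟩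
  · rintro ⟨⟨y, hy⟩, ⟨n, hn⟩, rfl⟩
    exact ⟨n, by simpa using congrArg Subtype.val hn⟩
end

section
/- Let R ⊆ S be an extension of commutative rings. If the induced extension of formal power series rings R[[X]] ⊆ S[[X]] is strongly local, then R = S. -/
/-- The subring `R[[X]]` of `S[[X]]`: power series all of whose coefficients lie in `R`. -/
def powerSeriesSubring {S : Type*} [CommRing S] (R : Subring S) : Subring (PowerSeries S) where
  carrier := {f | ∀ n, PowerSeries.coeff n f ∈ R}
  mul_mem' := by
    intro f g hf hg n
    rw [PowerSeries.coeff_mul]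
    exact sum_mem fun c _ => R.mul_mem (hf _) (hg _)
  one_mem' := by
    intro n
    rw [PowerSeries.coeff_one]
    split
    · exact R.one_mem
    · exact R.zero_mem
  add_mem' := by
    intro f g hf hg n
    rw [map_add]
    exact R.add_mem (hf n) (hg n)
  zero_mem' := by intro n; simpa using R.zero_mem
  neg_mem' := by
    intro f hf n
    rw [map_neg]
    exact R.neg_mem (hf n)

theorem SL_power_series_implies_equality {S : Type*} [CommRing S] (R : Subring S)
    (h : (powerSeriesSubring R).IsSLExt) : R = ⊤ := by
  ext s
  simp only [Subring.mem_top, iff_true]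
  have key : (1 - PowerSeries.C s * PowerSeries.X) * PowerSeries.mk (fun n => s ^ n) = 1 := by
    ext n
    cases n with
    | zero => simp
    | succ n =>
        simp [sub_mul, mul_assoc, PowerSeries.coeff_succ_X_mul, PowerSeries.coeff_C_mul]
        ring
  have hm := (h _ _ key).1 1
  simpa using R.neg_mem hm
end

section
/- For a commutative ring R with Jacobson radical J(R), the following are equivalent: (1) R is J-regular, i.e., for every x ∈ R there exists y ∈ R with x²y − x ∈ J(R); (2) the set of maximal ideals of R is a closed subset of the prime spectrum Spec(R) with the Zariski topology; (3) for every x ∈ R there exists y ∈ R such that xy ∈ J(R) and x + y is a unit of R. -/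
section Aux

variable {R : Type*} [CommRing R]

lemma memJacobsonBot_iff {x : R} :
    x ∈ Ideal.jacobson (⊥ : Ideal R) ↔ ∀ m : Ideal R, m.IsMaximal → x ∈ m := by
  simp [Ideal.jacobson, Ideal.mem_sInf]

/-- (1) implies (2). -/
lemma maxSet_eq_zeroLocus
    (h : ∀ x : R, ∃ y : R, x ^ 2 * y - x ∈ Ideal.jacobson (⊥ : Ideal R)) :
    {p : PrimeSpectrum R | p.asIdeal.IsMaximal} =
      PrimeSpectrum.zeroLocus (Ideal.jacobson (⊥ : Ideal R) : Set R) := by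
  ext p
  simp only [Set.mem_setOf_eq, PrimeSpectrum.mem_zeroLocus]
  constructor
  · intro hp z hz
    exact memJacobsonBot_iff.mp hz p.asIdeal hp
  · intro hle
    refine Ideal.isMaximal_iff.mpr ⟨p.isPrime.ne_top ∘ (Ideal.eq_top_iff_one _).mpr, ?_⟩
    intro J x hpJ hxp hxJ
    obtain ⟨y, hy⟩ := h x
    have hfac : x * (x * y - 1) ∈ p.asIdeal := by
      have : x * (x * y - 1) = x ^ 2 * y - x := by ring
      rw [this]; exact hle hy
    have hmem : x * y - 1 ∈ p.asIdeal :=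
      ((p.isPrime.mem_or_mem hfac).resolve_left hxp)
    have : (1 : R) = x * y - (x * y - 1) := by ring
    rw [this]
    exact J.sub_mem (J.mul_mem_right y hxJ) (hpJ hmem)

/-- From (2): every prime containing the Jacobson radical is maximal. -/
lemma prime_isMaximal_of_isClosed
    (hcl : IsClosed {p : PrimeSpectrum R | p.asIdeal.IsMaximal})
    (p : Ideal R) (hp : p.IsPrime) (hle : Ideal.jacobson (⊥ : Ideal R) ≤ p) :
    p.IsMaximal := by
  have hvan : PrimeSpectrum.vanishingIdeal {p : PrimeSpectrum R | p.asIdeal.IsMaximal} =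
      Ideal.jacobson (⊥ : Ideal R) := by
    ext x
    rw [PrimeSpectrum.mem_vanishingIdeal, memJacobsonBot_iff]
    constructor
    · intro H m hm
      exact H ⟨m, hm.isPrime⟩ hm
    · intro H q hq
      exact H q.asIdeal hq
  have hset : {p : PrimeSpectrum R | p.asIdeal.IsMaximal} =
      PrimeSpectrum.zeroLocus (Ideal.jacobson (⊥ : Ideal R) : Set R) := by
    conv_lhs => rw [← hcl.closure_eq, ← PrimeSpectrum.zeroLocus_vanishingIdeal_eq_closure, hvan]
  have : (⟨p, hp⟩ : PrimeSpectrum R) ∈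
      PrimeSpectrum.zeroLocus (Ideal.jacobson (⊥ : Ideal R) : Set R) :=
    (PrimeSpectrum.mem_zeroLocus _ _).mpr hle
  rw [← hset] at this
  exact this

/-- (2) implies (1). -/
lemma jreg_of_isClosed
    (hcl : IsClosed {p : PrimeSpectrum R | p.asIdeal.IsMaximal}) :
    ∀ x : R, ∃ y : R, x ^ 2 * y - x ∈ Ideal.jacobson (⊥ : Ideal R) := by
  intro x
  set Jac := Ideal.jacobson (⊥ : Ideal R) with hJac
  set C := Jac.colon (Ideal.span {x}) with hC
  set K := C ⊔ (Ideal.span {x} ⊔ Jac) with hKdef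
  have hK : K = ⊤ := by
    by_contra hne
    obtain ⟨m, hm, hKm⟩ := Ideal.exists_le_maximal K hne
    have h1m : (1 : R) ∉ m := (Ideal.ne_top_iff_one m).mp hm.ne_top
    have hxm : x ∈ m :=
      hKm (Ideal.mem_sup_right (Ideal.mem_sup_left (Ideal.subset_span rfl)))
    have hJm : Jac ≤ m := le_trans (le_sup_of_le_right le_sup_right) hKm
    have hCm : C ≤ m := le_trans le_sup_left hKm
    let M : Submonoid R :=
      { carrier := {r | ∃ s, s ∉ m ∧ ∃ n : ℕ, r = s * x ^ n}
        one_mem' := ⟨1, h1m, 0, by ring⟩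
        mul_mem' := by
          rintro a b ⟨s, hs, n, rfl⟩ ⟨t, ht, k, rfl⟩
          refine ⟨s * t, fun hst => ?_, n + k, by ring⟩
          rcases hm.isPrime.mem_or_mem hst with h | h
          · exact hs h
          · exact ht h }
    have hdisj : Disjoint (Jac : Set R) (M : Set R) := by
      rw [Set.disjoint_left]
      rintro z hz ⟨s, hs, n, rfl⟩
      cases n with
      | zero =>
        exact hs (hJm (by simpa using hz))
      | succ n =>
        have hpow : (s * x) ^ (n + 1) ∈ Jac := by
          have : (s * x) ^ (n + 1) = s ^ n * (s * x ^ (n + 1)) := by ring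
          rw [this]
          exact Jac.mul_mem_left _ hz
        have hsx : s * x ∈ Jac :=
          (Ideal.isRadical_jacobson (⊥ : Ideal R)) ⟨n + 1, hpow⟩
        have : s ∈ C := Ideal.mem_colon_span_singleton.mpr hsx
        exact hs (hCm this)
    obtain ⟨p, hp, hJp, hdp⟩ := Ideal.exists_le_prime_disjoint Jac M hdisj
    have hpm : p ≤ m := by
      intro r hr
      by_contra hrm
      exact Set.disjoint_left.mp hdp hr ⟨r, hrm, 0, by ring⟩
    have hpmax : p.IsMaximal := prime_isMaximal_of_isClosed hcl p hp hJp
    have hpeq : p = m := hpmax.eq_of_le hm.ne_top hpm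
    have hxM : x ∈ (M : Set R) := ⟨1, h1m, 1, by ring⟩
    exact Set.disjoint_left.mp hdp (hpeq ▸ hxm) hxM
  have h1 : (1 : R) ∈ K := hK ▸ Submodule.mem_top
  rw [hKdef, Submodule.mem_sup] at h1
  obtain ⟨c, hc, d, hd, hcd⟩ := h1
  rw [Submodule.mem_sup] at hd
  obtain ⟨b, hb, j, hj, hbj⟩ := hd
  obtain ⟨a, ha⟩ := Ideal.mem_span_singleton'.mp hb
  refine ⟨a, ?_⟩
  have hcx : c * x ∈ Jac := Ideal.mem_colon_span_singleton.mp hc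
  have h1' : c + (a * x + j) = 1 := by rw [ha, hbj, hcd]
  have hx2 : x ^ 2 * a - x = -(c * x + x * j) := by linear_combination x * h1'
  rw [hx2]
  exact neg_mem (add_mem hcx (Jac.mul_mem_left x hj))

end Aux

theorem J_regular_characterizations {R : Type*} [CommRing R] :
    -- (1) ↔ (2)
    ((∀ x : R, ∃ y : R, x ^ 2 * y - x ∈ Ideal.jacobson (⊥ : Ideal R)) ↔
      IsClosed {p : PrimeSpectrum R | p.asIdeal.IsMaximal}) ∧
    -- (1) ↔ (3)
    ((∀ x : R, ∃ y : R, x ^ 2 * y - x ∈ Ideal.jacobson (⊥ : Ideal R)) ↔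
      ∀ x : R, ∃ y : R, x * y ∈ Ideal.jacobson (⊥ : Ideal R) ∧ IsUnit (x + y)) := by
  constructor
  · constructor
    · intro h
      rw [maxSet_eq_zeroLocus h]
      exact PrimeSpectrum.isClosed_zeroLocus _
    · exact jreg_of_isClosed
  · constructor
    · intro h x
      obtain ⟨y, hy⟩ := h x
      refine ⟨1 - x ^ 2 * y ^ 2, ?_, ?_⟩
      · have : x * (1 - x ^ 2 * y ^ 2) = -((x * y + 1) * (x ^ 2 * y - x)) := by ring
        rw [this]
        exact neg_mem (Ideal.mul_mem_left _ _ hy)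
      · have hab : (x + (1 - x ^ 2 * y ^ 2)) * (x * y ^ 2 + 1 - x ^ 2 * y ^ 2) - 1 =
            ((x * y + 1) * (x * y ^ 2 - y ^ 2 - 1)) * (x ^ 2 * y - x) := by ring
        have hmem : (x + (1 - x ^ 2 * y ^ 2)) * (x * y ^ 2 + 1 - x ^ 2 * y ^ 2) - 1 ∈
            Ideal.jacobson (⊥ : Ideal R) := by
          rw [hab]; exact Ideal.mul_mem_left _ _ hy
        exact isUnit_of_mul_isUnit_left
          (Ideal.isUnit_of_sub_one_mem_jacobson_bot _ hmem)
    · intro h x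
      obtain ⟨y, hxy, hu⟩ := h x
      obtain ⟨u, hu⟩ := hu
      refine ⟨(↑u⁻¹ : R), ?_⟩
      have huu : (↑u : R) * ↑u⁻¹ = 1 := u.mul_inv
      have key : x ^ 2 * ↑u⁻¹ - x = -((x * y) * ↑u⁻¹) := by
        have hx : x * (↑u : R) = x ^ 2 + x * y := by rw [hu]; ring
        calc x ^ 2 * (↑u⁻¹ : R) - x = (x ^ 2 - x * ↑u) * ↑u⁻¹ + x * (↑u * ↑u⁻¹) - x := by ring
          _ = -((x * y) * ↑u⁻¹) := by rw [hx, huu]; ring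
      rw [key]
      exact neg_mem (Ideal.mul_mem_right _ _ hxy)
end

section
/- Let R ⊆ S be an integral extension of commutative rings such that the induced map Spec(S) → Spec(R) (sending a prime ideal of S to its contraction to R) is injective (an i-extension). Then R is J-regular if and only if S is J-regular. -/
/-- A commutative ring `R` is *J-regular* if `R/J(R)` is von Neumann regular, i.e.
for every `x ∈ R` there exists `y` with `x²y − x ∈ J(R)`. -/
def IsJRegular (R : Type*) [CommRing R] : Prop :=
  ∀ x : R, ∃ y : R, x ^ 2 * y - x ∈ Ideal.jacobson (⊥ : Ideal R)

/-- A ring is J-regular iff every prime containing the Jacobson radical is maximal. -/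
lemma isJRegular_iff_primes (R : Type*) [CommRing R] :
    IsJRegular R ↔
      ∀ P : Ideal R, P.IsPrime → Ideal.jacobson (⊥ : Ideal R) ≤ P → P.IsMaximal := by
  constructor
  · intro h P hP hJP
    rw [Ideal.isMaximal_iff]
    refine ⟨hP.1 ∘ (Ideal.eq_top_iff_one P).2, fun I x hPI hxP hxI => ?_⟩
    obtain ⟨y, hy⟩ := h x
    have hmem : x * (x * y - 1) ∈ P := by
      have h' := hJP hy
      have e : x ^ 2 * y - x = x * (x * y - 1) := by ring
      rwa [e] at h'
    rcases hP.mem_or_mem hmem with h1 | h2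
    · exact absurd h1 hxP
    · have : x * y - (x * y - 1) ∈ I := I.sub_mem (I.mul_mem_right y hxI) (hPI h2)
      simpa using this
  · intro h x
    set J : Ideal R := Ideal.jacobson (⊥ : Ideal R) with hJ
    set K : Ideal R := Ideal.span {x ^ 2} ⊔ J.colon (Ideal.span {x}) with hK
    have hJK : J ≤ K := le_sup_of_le_right fun j hj =>
      Ideal.mem_colon_span_singleton.2 (J.mul_mem_right x hj)
    have hKtop : K = ⊤ := by
      by_contra hne
      obtain ⟨P, hPmax, hKP⟩ := Ideal.exists_le_maximal K hne
      have hPprime : P.IsPrime := hPmax.isPrime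
      have hxP : x ∈ P := by
        have : x ^ 2 ∈ P := hKP (le_sup_left (α := Ideal R) (Ideal.subset_span rfl))
        exact hPprime.mem_of_pow_mem 2 this
      -- find u ∉ P and n with u * x ^ n ∈ J
      have hu : ∃ u ∉ P, ∃ n : ℕ, u * x ^ n ∈ J := by
        by_contra hcon
        push_neg at hcon
        set T : Submonoid R := P.primeCompl ⊔ Submonoid.powers x with hT
        have hdisj : Disjoint (J : Set R) (T : Set R) := by
          rw [Set.disjoint_left]
          intro a haJ haT
          obtain ⟨u, hu, z, hz, rfl⟩ := Submonoid.mem_sup.1 haT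
          obtain ⟨n, rfl⟩ := hz
          exact hcon u hu n haJ
        obtain ⟨Q, hQprime, hJQ, hQdisj⟩ := Ideal.exists_le_prime_disjoint J T hdisj
        have hQmax : Q.IsMaximal := h Q hQprime hJQ
        have hQP : Q ≤ P := by
          intro a haQ
          by_contra haP
          exact Set.disjoint_left.1 hQdisj haQ
            (SetLike.le_def.1 (le_sup_left : P.primeCompl ≤ T) haP)
        have : Q = P := hQmax.eq_of_le hPmax.ne_top hQP
        have hxQ : x ∉ Q := fun hxQ => Set.disjoint_left.1 hQdisj hxQ
          (SetLike.le_def.1 (le_sup_right : Submonoid.powers x ≤ T)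
            (Submonoid.mem_powers x))
        exact hxQ (this ▸ hxP)
      obtain ⟨u, huP, n, hun⟩ := hu
      -- then u * x ∈ J since J is radical
      have hux : u * x ∈ J := by
        have h1 : u * x ^ (n + 1) ∈ J := by
          have : u * x ^ (n + 1) = x * (u * x ^ n) := by ring
          rw [this]; exact J.mul_mem_left x hun
        have h2 : (u * x) ^ (n + 1) ∈ J := by
          have : (u * x) ^ (n + 1) = u ^ n * (u * x ^ (n + 1)) := by ring
          rw [this]; exact J.mul_mem_left _ h1
        exact (Ideal.isRadical_jacobson (⊥ : Ideal R)) ⟨n + 1, h2⟩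
      have : u ∈ P := hKP (le_sup_right (α := Ideal R) (Ideal.mem_colon_span_singleton.2 hux))
      exact huP this
    -- 1 ∈ K, extract the witnesses
    have hone : (1 : R) ∈ K := hKtop ▸ Submodule.mem_top
    rw [hK] at hone
    obtain ⟨a, ha, b, hb, hab⟩ := Submodule.mem_sup.1 hone
    obtain ⟨c, hc⟩ := Ideal.mem_span_singleton'.1 ha
    refine ⟨c * x, ?_⟩
    have hbx : b * x ∈ J := Ideal.mem_colon_span_singleton.1 hb
    have heq : x ^ 2 * (c * x) - x = -(b * x) := by
      have h1 : c * x ^ 2 + b = 1 := by rw [hc]; exact hab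
      linear_combination x * h1
    rw [heq]
    exact J.neg_mem hbx

theorem J_regular_transfers_along_integral_i_extensions
    {S : Type*} [CommRing S] (R : Subring S)
    (hint : ∀ x : S, IsIntegral R x)
    (hi : ∀ Q₁ Q₂ : Ideal S, Q₁.IsPrime → Q₂.IsPrime →
      Q₁.comap R.subtype = Q₂.comap R.subtype → Q₁ = Q₂) :
    IsJRegular R ↔ IsJRegular S := by
  haveI : Algebra.IsIntegral R S := ⟨fun x => hint x⟩
  have halg : algebraMap R S = R.subtype := rfl
  have hker : RingHom.ker (algebraMap R S) = ⊥ := by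
    rw [halg]
    exact (RingHom.injective_iff_ker_eq_bot R.subtype).1 R.subtype_injective
  -- contraction of the Jacobson radical of S is the Jacobson radical of R
  have hcomap : (Ideal.jacobson (⊥ : Ideal S)).comap (algebraMap R S) =
      Ideal.jacobson (⊥ : Ideal R) := by
    apply le_antisymm
    · -- b in every maximal of S implies b in every maximal of R
      intro b hb
      rw [Ideal.jacobson, Ideal.mem_sInf]
      rintro m ⟨-, hm⟩
      haveI := hm
      obtain ⟨n, hnmax, hnm⟩ :=
        Ideal.exists_ideal_over_maximal_of_isIntegral (S := S) m (hker ▸ bot_le)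
      have hbn : (algebraMap R S) b ∈ n := by
        have : Ideal.jacobson (⊥ : Ideal S) ≤ n := sInf_le ⟨bot_le, hnmax⟩
        exact this hb
      rw [← hnm]
      exact hbn
    · intro a ha
      rw [Ideal.mem_comap, Ideal.jacobson, Ideal.mem_sInf]
      rintro n ⟨-, hn⟩
      haveI := hn
      have : (n.comap (algebraMap R S)).IsMaximal :=
        Ideal.isMaximal_comap_of_isIntegral_of_isMaximal n
      have haa : a ∈ n.comap (algebraMap R S) := by
        rw [Ideal.jacobson, Ideal.mem_sInf] at ha
        exact ha ⟨bot_le, this⟩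
      exact haa
  rw [isJRegular_iff_primes, isJRegular_iff_primes]
  constructor
  · intro hR Q hQ hJQ
    haveI := hQ
    have hPprime : (Q.comap (algebraMap R S)).IsPrime := Ideal.comap_isPrime _ Q
    have hPJ : Ideal.jacobson (⊥ : Ideal R) ≤ Q.comap (algebraMap R S) := by
      rw [← hcomap]
      exact Ideal.comap_mono hJQ
    have hPmax := hR _ hPprime hPJ
    exact Ideal.isMaximal_of_isIntegral_of_isMaximal_comap Q hPmax
  · intro hS P hP hJP
    haveI := hP
    obtain ⟨Q, hQge, hQprime, hQcomap⟩ :=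
      Ideal.exists_ideal_over_prime_of_isIntegral P (Ideal.jacobson (⊥ : Ideal S))
        (hcomap ▸ hJP)
    haveI := hQprime
    have hQmax : Q.IsMaximal := hS Q hQprime hQge
    have := Ideal.isMaximal_comap_of_isIntegral_of_isMaximal (R := R) Q
    rwa [hQcomap] at this
end

section
/- Let R ⊆ S be a strongly local extension of commutative rings. Then S is J-regular if and only if R is J-regular, R ⊆ S is an integral extension, and R ⊆ S is seminormal. Moreover, if these equivalent conditions hold, then J(R) = J(S): the Jacobson radical of S is contained in R and coincides with the Jacobson radical of R. -/
section Aux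

variable {S : Type*} [CommRing S] (R : Subring S)

/-- In an SL extension, the Jacobson radical of `S` is contained in `R`. -/
lemma SL_jacobson_subset (hSL : R.IsSLExt) {x : S}
    (hx : x ∈ Ideal.jacobson (⊥ : Ideal S)) : x ∈ R := by
  have h1 : IsUnit (x * 1 + 1) := Ideal.mem_jacobson_bot.mp hx 1
  obtain ⟨u, hu⟩ := h1
  have hmul : (x * 1 + 1) * ↑u⁻¹ = 1 := by rw [← hu]; exact u.mul_inv
  obtain ⟨h1, -⟩ := hSL _ _ hmul
  have : x = (x * 1 + 1) - 1 := by ring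
  rw [this]
  exact R.sub_mem h1 R.one_mem

/-- In an SL extension, `J(S) ∩ R ⊆ J(R)`. -/
lemma SL_mem_jacobson_R (hSL : R.IsSLExt) {a : ↥R}
    (ha : (a : S) ∈ Ideal.jacobson (⊥ : Ideal S)) :
    a ∈ Ideal.jacobson (⊥ : Ideal ↥R) := by
  rw [Ideal.mem_jacobson_bot]
  intro y
  obtain ⟨u, hu⟩ := Ideal.mem_jacobson_bot.mp ha (y : S)
  have hmul : ((a : S) * (y : S) + 1) * ↑u⁻¹ = 1 := by rw [← hu]; exact u.mul_inv
  obtain ⟨-, h2⟩ := hSL _ _ hmul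
  refine IsUnit.of_mul_eq_one (⟨(↑u⁻¹ : S), h2⟩ : ↥R) (Subtype.ext ?_)
  push_cast
  exact hmul

/-- The key decomposition in an SL extension of a J-regular ring: every `x : S`
can be written as `u * (x*w)` with `u, w ∈ R`, `u*w = 1`, and `x*w` idempotent
modulo `J(S)`. -/
lemma SL_decomp (hSL : R.IsSLExt) (hS : IsJRegular S) (x : S) :
    ∃ u w : S, u ∈ R ∧ w ∈ R ∧ u * w = 1 ∧
      (x * w) * (x * w) - x * w ∈ Ideal.jacobson (⊥ : Ideal S) := by
  set J := Ideal.jacobson (⊥ : Ideal S) with hJ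
  obtain ⟨y, hy⟩ := hS x
  have ha : x * (y * x * y) * x - x ∈ J := by
    have h : x * (y * x * y) * x - x = (x ^ 2 * y - x) * (1 + y * x) := by ring
    rw [h]
    exact J.mul_mem_right _ hy
  have hb : (y * x * y) * x * (y * x * y) - (y * x * y) ∈ J := by
    have h : (y * x * y) * x * (y * x * y) - (y * x * y)
        = y * (x * (y * x * y) * x - x) * y := by ring
    rw [h]
    exact J.mul_mem_right _ (J.mul_mem_left _ ha)
  have huv : (x + 1 - x * (y * x * y)) * ((y * x * y) + 1 - x * (y * x * y)) - 1 ∈ J := by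
    have h : (x + 1 - x * (y * x * y)) * ((y * x * y) + 1 - x * (y * x * y)) - 1
        = (x * (y * x * y) * x - x) * (y * x * y) - (x * (y * x * y) * x - x)
          - ((y * x * y) * x * (y * x * y) - (y * x * y)) := by ring
    rw [h]
    exact J.sub_mem (J.sub_mem (J.mul_mem_right _ ha) ha) hb
  have hunit : IsUnit ((x + 1 - x * (y * x * y)) * ((y * x * y) + 1 - x * (y * x * y))) := by
    have h := Ideal.mem_jacobson_bot.mp huv 1
    have h2 : ((x + 1 - x * (y * x * y)) * ((y * x * y) + 1 - x * (y * x * y)) - 1) * 1 + 1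
        = (x + 1 - x * (y * x * y)) * ((y * x * y) + 1 - x * (y * x * y)) := by ring
    rwa [h2] at h
  have hu_unit : IsUnit (x + 1 - x * (y * x * y)) := isUnit_of_mul_isUnit_left hunit
  obtain ⟨U, hU⟩ := hu_unit
  have huw : (x + 1 - x * (y * x * y)) * ↑U⁻¹ = 1 := by rw [← hU]; exact U.mul_inv
  obtain ⟨huR, hwR⟩ := hSL _ _ huw
  refine ⟨x + 1 - x * (y * x * y), ↑U⁻¹, huR, hwR, huw, ?_⟩
  have key : (x * ↑U⁻¹) * (x * ↑U⁻¹) - x * ↑U⁻¹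
      = (x * (y * x * y) * x - x) * (↑U⁻¹ * ↑U⁻¹) := by
    linear_combination (x * (↑U⁻¹ : S)) * huw
  rw [key]
  exact J.mul_mem_right _ ha

/-- A general fact about minimal primes: if `p` is a minimal prime over `I`
and `x ∈ p`, then some `y ∉ p` satisfies `y * xⁿ ∈ I`. -/
lemma exists_mul_pow_mem_of_mem_minimalPrimes {A : Type*} [CommRing A] {I p : Ideal A}
    (hp : p ∈ I.minimalPrimes) {x : A} (hx : x ∈ p) :
    ∃ y ∉ p, ∃ n : ℕ, y * x ^ n ∈ I := by
  by_contra hcon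
  push_neg at hcon
  have hone : (1 : A) ∉ p := (Ideal.ne_top_iff_one p).mp hp.1.1.ne_top
  set M : Submonoid A :=
    { carrier := {z | ∃ y ∉ p, ∃ n : ℕ, y * x ^ n = z}
      one_mem' := ⟨1, hone, 0, by ring⟩
      mul_mem' := by
        rintro z₁ z₂ ⟨y₁, hy₁, n₁, rfl⟩ ⟨y₂, hy₂, n₂, rfl⟩
        refine ⟨y₁ * y₂, fun h => ?_, n₁ + n₂, by ring⟩
        rcases hp.1.1.mem_or_mem h with h | h
        exacts [hy₁ h, hy₂ h] } with hM
  have hdisj : Disjoint (I : Set A) (M : Set A) := by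
    rw [Set.disjoint_left]
    rintro z hzI ⟨y, hy, n, rfl⟩
    exact hcon y hy n hzI
  obtain ⟨q, hq, hIq, hdq⟩ := Ideal.exists_le_prime_disjoint I M hdisj
  have hqp : q ≤ p := by
    intro z hz
    by_contra hzp
    exact Set.disjoint_left.mp hdq hz ⟨z, hzp, 0, by ring⟩
  have hpq : p ≤ q := hp.2 ⟨hq, hIq⟩ hqp
  exact Set.disjoint_left.mp hdq (hpq hx) ⟨1, hone, 1, by ring⟩

end Aux

theorem SL_J_regular_characterization {S : Type*} [CommRing S] (R : Subring S)
    (hSL : R.IsSLExt) :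
    -- `S` is J-regular iff `R` is J-regular and `R ⊆ S` is integral and seminormal
    (IsJRegular S ↔
      (IsJRegular R ∧ (∀ x : S, IsIntegral R x) ∧
        (∀ b : S, b ^ 2 ∈ R → b ^ 3 ∈ R → b ∈ R))) ∧
    -- if these conditions hold then `J(R) = J(S)`
    (IsJRegular S →
      Subtype.val '' (Ideal.jacobson (⊥ : Ideal R) : Set ↥R) =
        (Ideal.jacobson (⊥ : Ideal S) : Set S)) := by
  constructor
  · constructor
    · -- forward direction
      intro hS
      refine ⟨?_, ?_, ?_⟩
      · -- R is J-regular
        intro x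
        obtain ⟨u, w, huR, hwR, huw, ht⟩ := SL_decomp R hSL hS (x : S)
        refine ⟨⟨w, hwR⟩, ?_⟩
        apply SL_mem_jacobson_R R hSL
        have hmem : ((x : S) * w) * ((x : S) * w) - (x : S) * w ∈
            Ideal.jacobson (⊥ : Ideal S) := ht
        have key : ((x : S) ^ 2 * w - (x : S))
            = (((x : S) * w) * ((x : S) * w) - (x : S) * w) * u := by
          linear_combination ((x : S) - (x : S) ^ 2 * w) * huw
        have h2 : ((x : S) ^ 2 * w - (x : S)) ∈ Ideal.jacobson (⊥ : Ideal S) := by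
          rw [key]
          exact Ideal.mul_mem_right _ _ hmem
        have hc : ((x ^ 2 * ⟨w, hwR⟩ - x : ↥R) : S) = (x : S) ^ 2 * w - (x : S) := by
          push_cast
          ring
        rw [hc]
        exact h2
      · -- integrality
        intro x
        obtain ⟨u, w, huR, hwR, huw, ht⟩ := SL_decomp R hSL hS x
        have hrR : (x * w) * (x * w) - x * w ∈ R := SL_jacobson_subset R hSL ht
        refine ⟨Polynomial.X ^ 2 + (Polynomial.C (-(⟨u, huR⟩ : ↥R)) * Polynomial.X
          + Polynomial.C (-((⟨u, huR⟩ : ↥R) * (⟨u, huR⟩ : ↥R)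
            * (⟨(x * w) * (x * w) - x * w, hrR⟩ : ↥R)))), ?_, ?_⟩
        · apply Polynomial.monic_X_pow_add
          exact lt_of_le_of_lt Polynomial.degree_linear_le (by exact_mod_cast one_lt_two)
        · have hx : x = u * (x * w) := by linear_combination (-x) * huw
          show Polynomial.eval₂ _ _ _ = 0
          simp only [Polynomial.eval₂_add, Polynomial.eval₂_mul, Polynomial.eval₂_pow,
            Polynomial.eval₂_X, Polynomial.eval₂_C]
          have hcoe1 : (algebraMap ↥R S) (-(⟨u, huR⟩ : ↥R)) = -u := rfl
          have hcoe2 : (algebraMap ↥R S) (-((⟨u, huR⟩ : ↥R) * (⟨u, huR⟩ : ↥R)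
              * (⟨(x * w) * (x * w) - x * w, hrR⟩ : ↥R)))
              = -(u * u * ((x * w) * (x * w) - x * w)) := rfl
          rw [hcoe1, hcoe2]
          linear_combination (x + u * (x * w) - u) * hx
      · -- seminormality
        intro b hb2 hb3
        obtain ⟨u, w, huR, hwR, huw, ht⟩ := SL_decomp R hSL hS b
        have hrR : (b * w) * (b * w) - b * w ∈ R := SL_jacobson_subset R hSL ht
        have htt : (b * w) * (b * w) ∈ R := by
          have h : (b * w) * (b * w) = b ^ 2 * (w * w) := by ring
          rw [h]
          exact R.mul_mem hb2 (R.mul_mem hwR hwR)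
        have htR : b * w ∈ R := by
          have h : b * w = (b * w) * (b * w) - ((b * w) * (b * w) - b * w) := by ring
          rw [h]
          exact R.sub_mem htt hrR
        have hb : b = u * (b * w) := by linear_combination (-b) * huw
        rw [hb]
        exact R.mul_mem huR htR
    · -- reverse direction
      rintro ⟨hR, hInt, -⟩
      haveI : Algebra.IsIntegral ↥R S := ⟨hInt⟩
      set J := Ideal.jacobson (⊥ : Ideal S) with hJdef
      -- J(R) maps into J(S)
      have hJRS : ∀ a : ↥R, a ∈ Ideal.jacobson (⊥ : Ideal ↥R) → (a : S) ∈ J := by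
        intro a ha
        rw [hJdef, Ideal.jacobson, Ideal.mem_sInf]
        rintro I ⟨-, hI⟩
        haveI := hI
        have hcm : (I.comap (algebraMap ↥R S)).IsMaximal :=
          Ideal.isMaximal_comap_of_isIntegral_of_isMaximal I
        have : Ideal.jacobson (⊥ : Ideal ↥R) ≤ I.comap (algebraMap ↥R S) :=
          sInf_le ⟨bot_le, hcm⟩
        exact this ha
      -- every prime of S containing J(S) is maximal
      have hdim : ∀ q : Ideal S, q.IsPrime → J ≤ q → q.IsMaximal := by
        intro q hq hJq
        haveI := hq
        have hpm : (q.comap (algebraMap ↥R S)).IsMaximal := by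
          rw [Ideal.isMaximal_iff]
          constructor
          · intro h
            apply hq.ne_top
            rw [Ideal.eq_top_iff_one]
            simpa using h
          · intro I b hle hbp hbI
            obtain ⟨c, hc⟩ := hR b
            have hJRp : Ideal.jacobson (⊥ : Ideal ↥R) ≤ q.comap (algebraMap ↥R S) := by
              intro a ha
              exact Ideal.mem_comap.mpr (hJq (hJRS a ha))
            have h1 : b * (b * c - 1) ∈ q.comap (algebraMap ↥R S) := by
              have h : b * (b * c - 1) = b ^ 2 * c - b := by ring
              rw [h]
              exact hJRp hc
            haveI hq' : (q.comap (algebraMap ↥R S)).IsPrime := Ideal.IsPrime.comap _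
            rcases hq'.mem_or_mem h1 with h | h
            · exact absurd h hbp
            · have h2 : (1 : ↥R) = b * c - (b * c - 1) := by ring
              rw [h2]
              exact I.sub_mem (I.mul_mem_right c hbI) (hle h)
        exact Ideal.isMaximal_of_isIntegral_of_isMaximal_comap q hpm
      -- now prove S is J-regular
      intro x
      have hK : (1 : S) ∈ Ideal.span {x ^ 2} ⊔ J.colon (Ideal.span {x}) ⊔ J := by
        by_contra h1
        have hKne : Ideal.span {x ^ 2} ⊔ J.colon (Ideal.span {x}) ⊔ J ≠ ⊤ := by
          intro h
          exact h1 (h ▸ Submodule.mem_top)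
        obtain ⟨m, hm, hKm⟩ := Ideal.exists_le_maximal _ hKne
        have hmp : m.IsPrime := hm.isPrime
        have hJm : J ≤ m := le_trans le_sup_right hKm
        have hx2m : x ^ 2 ∈ m :=
          hKm (Submodule.mem_sup_left (Submodule.mem_sup_left (Ideal.subset_span rfl)))
        have hxm : x ∈ m := hmp.mem_of_pow_mem 2 hx2m
        have hmmin : m ∈ J.minimalPrimes := by
          constructor
          · exact ⟨hmp, hJm⟩
          · rintro q ⟨hq, hJq⟩ hqm
            exact le_of_eq ((hdim q hq hJq).eq_of_le hmp.ne_top hqm).symm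
        obtain ⟨y, hy, n, hyn⟩ := exists_mul_pow_mem_of_mem_minimalPrimes hmmin hxm
        have hyx : y * x ∈ J := by
          have hrad : y * x ∈ J.radical := by
            rw [Ideal.mem_radical_iff]
            refine ⟨n + 1, ?_⟩
            have h : (y * x) ^ (n + 1) = (y * x ^ n) * (y ^ n * x) := by ring
            rw [h]
            exact J.mul_mem_right _ hyn
          exact (le_trans Ideal.radical_le_jacobson (le_of_eq Ideal.jacobson_idem)) hrad
        have hyA : y ∈ J.colon (Ideal.span {x}) := Ideal.mem_colon_span_singleton.mpr hyx
        exact hy (hKm (Submodule.mem_sup_left (Submodule.mem_sup_right hyA)))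
      rw [Submodule.mem_sup] at hK
      obtain ⟨k, hk, j, hj, hkj⟩ := hK
      rw [Submodule.mem_sup] at hk
      obtain ⟨a, ha, b, hb, hab⟩ := hk
      obtain ⟨s, hs⟩ := Ideal.mem_span_singleton'.mp ha
      refine ⟨s * x, ?_⟩
      have hbx : b * x ∈ J := Ideal.mem_colon_span_singleton.mp hb
      have hjx : j * x ∈ J := J.mul_mem_right x hj
      have h : x ^ 2 * (s * x) - x = -(b * x) - j * x := by
        linear_combination x * hs + x * hab + x * hkj
      rw [h]
      exact J.sub_mem (J.neg_mem hbx) hjx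
  · -- J(R) = J(S) when S is J-regular
    intro hS
    apply Set.Subset.antisymm
    · rintro _ ⟨a, ha, rfl⟩
      show (a : S) ∈ Ideal.jacobson (⊥ : Ideal S)
      rw [Ideal.mem_jacobson_bot]
      intro z
      obtain ⟨u, w, huR, hwR, huw, ht⟩ := SL_decomp R hSL hS z
      have hz : z = u * (z * w) := by linear_combination (-z) * huw
      set c : ↥R := a * ⟨u, huR⟩ with hcdef
      have hcJR : c ∈ Ideal.jacobson (⊥ : Ideal ↥R) := Ideal.mul_mem_right _ _ ha
      have hunit1 : IsUnit ((1 : ↥R) + c) := by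
        have h := Ideal.mem_jacobson_bot.mp hcJR 1
        have h2 : c * 1 + 1 = 1 + c := by ring
        rwa [h2] at h
      obtain ⟨V, hV⟩ := hunit1
      have hvv : ((1 : ↥R) + c) * ↑V⁻¹ = 1 := by rw [← hV]; exact V.mul_inv
      have h0 : c + (-c * ↑V⁻¹) + c * (-c * ↑V⁻¹) = 0 := by
        linear_combination (-c) * hvv
      have hS0 : ((a : S) * u) + ((-c * ↑V⁻¹ : ↥R) : S)
          + ((a : S) * u) * ((-c * ↑V⁻¹ : ↥R) : S) = 0 := by
        have := congrArg (Subtype.val) h0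
        push_cast at this
        convert this using 2 <;> simp [hcdef]
      set d : S := ((-c * ↑V⁻¹ : ↥R) : S) with hddef
      have key : ((a : S) * z + 1) * (1 + d * (z * w))
          = 1 + ((a : S) * u * d) * ((z * w) * (z * w) - z * w) := by
        linear_combination ((a : S) * (1 + d * (z * w))) * hz + (z * w) * hS0
      have hjm : ((a : S) * u * d) * ((z * w) * (z * w) - z * w) ∈
          Ideal.jacobson (⊥ : Ideal S) := Ideal.mul_mem_left _ _ ht
      have hru : IsUnit (1 + ((a : S) * u * d) * ((z * w) * (z * w) - z * w)) := by
        have h := Ideal.mem_jacobson_bot.mp hjm 1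
        have h2 : ((a : S) * u * d) * ((z * w) * (z * w) - z * w) * 1 + 1
            = 1 + ((a : S) * u * d) * ((z * w) * (z * w) - z * w) := by ring
        rwa [h2] at h
      rw [← key] at hru
      exact isUnit_of_mul_isUnit_left hru
    · intro x hx
      exact ⟨⟨x, SL_jacobson_subset R hSL hx⟩, SL_mem_jacobson_R R hSL hx, rfl⟩
end

section
/- Let R ⊆ S be a strongly local extension of commutative rings with S von Neumann regular. Then: R ⊆ S is an integral extension; R ⊆ S is seminormal; R ⊆ S is infra-integral — indeed for every prime ideal Q of S with P = Q ∩ R, the natural map R/P → S/Q is an isomorphism; the extension is quadratic, i.e., every x ∈ S satisfies x² = ux for some unit u of R; and R is von Neumann regular. -/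
theorem SL_over_von_neumann_regular {S : Type*} [CommRing S] (R : Subring S)
    (hSL : R.IsSLExt)
    (hvnr : ∀ x : S, ∃ y : S, x ^ 2 * y = x) :
    -- `R ⊆ S` is integral
    (∀ x : S, IsIntegral R x) ∧
    -- `R ⊆ S` is seminormal
    (∀ b : S, b ^ 2 ∈ R → b ^ 3 ∈ R → b ∈ R) ∧
    -- `R ⊆ S` is infra-integral: the maps `R/(Q ∩ R) → S/Q` are isomorphisms
    (∀ Q : Ideal S, Q.IsPrime →
      Function.Bijective (Ideal.quotientMap Q R.subtype le_rfl)) ∧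
    -- the extension is quadratic: every `x ∈ S` satisfies `x² = u·x` for a unit `u` of `R`
    (∀ x : S, ∃ u : ↥R, IsUnit u ∧ x ^ 2 = (u : S) * x) ∧
    -- `R` is von Neumann regular
    (∀ x : ↥R, ∃ y : ↥R, x ^ 2 * y = x) := by
  -- key quadratic lemma
  have key : ∀ x : S, ∃ u : ↥R, IsUnit u ∧ x ^ 2 = (u : S) * x := by
    intro x
    obtain ⟨y, hy⟩ := hvnr x
    have huv : (x + 1 - x * y) * (x * y ^ 2 + 1 - x * y) = 1 := by
      linear_combination (2 * y - y ^ 2 - 1) * hy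
    obtain ⟨hu, hv⟩ := hSL _ _ huv
    refine ⟨⟨_, hu⟩, ⟨⟨⟨_, hu⟩, ⟨_, hv⟩, ?_, ?_⟩, rfl⟩, ?_⟩
    · exact Subtype.ext huv
    · exact Subtype.ext (by rw [mul_comm] at huv; exact huv)
    · show x ^ 2 = (x + 1 - x * y) * x
      linear_combination hy
  refine ⟨?_, ?_, ?_, key, ?_⟩
  · -- integral
    intro x
    obtain ⟨u, _, hx⟩ := key x
    refine ⟨Polynomial.X ^ 2 - Polynomial.C u * Polynomial.X, ?_, ?_⟩
    · monicity!
    · simp only [Polynomial.eval₂_sub, Polynomial.eval₂_pow, Polynomial.eval₂_X,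
        Polynomial.eval₂_mul, Polynomial.eval₂_C]
      rw [show (algebraMap ↥R S) u = (u : S) from rfl]
      linear_combination hx
  · -- seminormal
    intro b hb2 _
    obtain ⟨u, hu, hb⟩ := key b
    obtain ⟨w, hw⟩ := hu.exists_left_inv
    have hw' : (w : S) * (u : S) = 1 := by exact_mod_cast congrArg Subtype.val hw
    have : b = (w : S) * b ^ 2 := by linear_combination (-(w : S)) * hb - b * hw'
    rw [this]
    exact R.mul_mem w.2 hb2
  · -- infra-integral
    intro Q hQ
    constructor
    · exact Ideal.quotientMap_injective
    · intro z
      obtain ⟨x, rfl⟩ := Ideal.Quotient.mk_surjective z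
      obtain ⟨u, _, hx⟩ := key x
      have hmem : x * (x - (u : S)) ∈ Q := by
        have : x * (x - (u : S)) = 0 := by linear_combination hx
        rw [this]; exact Q.zero_mem
      rcases hQ.mem_or_mem hmem with h | h
      · exact ⟨0, by simp [Ideal.Quotient.eq_zero_iff_mem.mpr h]⟩
      · refine ⟨Ideal.Quotient.mk _ u, ?_⟩
        rw [Ideal.quotientMap_mk]
        exact Ideal.Quotient.eq.mpr (by simpa [neg_sub] using Q.neg_mem h)
  · -- R is vN regular
    intro x
    obtain ⟨u, hu, hx⟩ := key (x : S)
    obtain ⟨w, hw⟩ := hu.exists_left_inv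
    have hw' : (w : S) * (u : S) = 1 := by exact_mod_cast congrArg Subtype.val hw
    refine ⟨w, Subtype.ext ?_⟩
    push_cast
    linear_combination (w : S) * hx + (x : S) * hw'
end

section
/- Let R ⊆ S be a strongly local extension of commutative rings with S von Neumann regular. Then: (1) if the induced map Spec(S) → Spec(R) is injective, then R = S; (2) if R ⊆ S is u-closed (every b ∈ S with b² − b ∈ R and b³ − b² ∈ R lies in R), then R = S; (3) if 2 is a unit of S, then R = S. -/
section aux
variable {S : Type*} [CommRing S] (R : Subring S)

/-- Decomposition: every element of a vNR ring is (unit) + (idempotent) - 1. -/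
lemma SL_decomp_s13 (hvnr : ∀ x : S, ∃ y : S, x ^ 2 * y = x) (x : S) :
    ∃ e u v : S, e * e = e ∧ u * v = 1 ∧ x = u + e - 1 := by
  obtain ⟨y, hx⟩ := hvnr x
  refine ⟨x * y, x + 1 - x * y, x * y * y + 1 - x * y, ?_, ?_, by ring⟩
  · have := hx; linear_combination y * hx
  · linear_combination (2 * y - y ^ 2 - 1) * hx

/-- If all idempotents of `S` lie in `R`, then `R = ⊤`. -/
lemma SL_top_of_idem (hSL : R.IsSLExt) (hvnr : ∀ x : S, ∃ y : S, x ^ 2 * y = x)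
    (hid : ∀ e : S, e * e = e → e ∈ R) : R = ⊤ := by
  rw [Subring.eq_top_iff']
  intro x
  obtain ⟨e, u, v, he, huv, hx⟩ := SL_decomp_s13 hvnr x
  have hu : u ∈ R := (hSL u v huv).1
  have heR := hid e he
  rw [hx]
  exact R.sub_mem (R.add_mem hu heR) R.one_mem

lemma exists_max_over {A B : Type*} [CommRing A] [CommRing B] (f : A →+* B)
    (hf : f.IsIntegral) (P : Ideal A) [P.IsMaximal] (hP : RingHom.ker f ≤ P) :
    ∃ Q : Ideal B, Q.IsMaximal ∧ Q.comap f = P := by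
  let _ := f.toAlgebra
  have : Algebra.IsIntegral A B := ⟨hf⟩
  exact Ideal.exists_ideal_over_maximal_of_isIntegral P hP

/-- Every element of `S` is integral over `R`. -/
lemma SL_integral (hSL : R.IsSLExt) (hvnr : ∀ x : S, ∃ y : S, x ^ 2 * y = x) :
    R.subtype.IsIntegral := by
  intro s
  obtain ⟨e, u, v, he, huv, hs⟩ := SL_decomp_s13 hvnr s
  obtain ⟨hu, -⟩ := hSL u v huv
  set ur : R := ⟨u, hu⟩ with hur
  refine ⟨Polynomial.X ^ 2 + Polynomial.C (1 - ur - ur) * Polynomial.X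
      + Polynomial.C ((1 - ur) ^ 2 - (1 - ur)), ?_, ?_⟩
  · rw [add_assoc]
    apply Polynomial.monic_X_pow_add
    exact lt_of_le_of_lt (Polynomial.degree_linear_le) (by decide)
  · simp only [Polynomial.eval₂_add, Polynomial.eval₂_mul, Polynomial.eval₂_X_pow,
      Polynomial.eval₂_C, Polynomial.eval₂_X, Subring.coe_subtype]
    push_cast
    rw [hs]
    linear_combination he

lemma exists_prime_over (hint : R.subtype.IsIntegral) (J : Ideal S) (m : Ideal R)
    [m.IsMaximal] (hm : J.comap R.subtype ≤ m) :
    ∃ Q : Ideal S, Q.IsPrime ∧ J ≤ Q ∧ Q.comap R.subtype = m := by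
  have hfint : ((Ideal.Quotient.mk J).comp R.subtype).IsIntegral := by
    intro z
    obtain ⟨s, rfl⟩ := Ideal.Quotient.mk_surjective z
    obtain ⟨p, hp, hp0⟩ := hint s
    exact ⟨p, hp, by rw [← Polynomial.hom_eval₂, hp0, map_zero]⟩
  have hker : RingHom.ker ((Ideal.Quotient.mk J).comp R.subtype) ≤ m := by
    rw [← RingHom.comap_ker, Ideal.mk_ker]
    exact hm
  obtain ⟨Q', hQ', hcom⟩ := exists_max_over _ hfint m hker
  haveI := hQ'.isPrime
  refine ⟨Q'.comap (Ideal.Quotient.mk J), Ideal.IsPrime.comap _, ?_, ?_⟩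
  · intro x hx
    simp only [Ideal.mem_comap, Ideal.Quotient.eq_zero_iff_mem.mpr hx]
    exact Q'.zero_mem
  · rw [Ideal.comap_comap]
    exact hcom

end aux

theorem SL_over_von_neumann_regular_trivial_cases {S : Type*} [CommRing S] (R : Subring S)
    (hSL : R.IsSLExt)
    (hvnr : ∀ x : S, ∃ y : S, x ^ 2 * y = x) :
    -- (1) if `Spec(S) → Spec(R)` is injective then `R = S`
    ((∀ Q₁ Q₂ : Ideal S, Q₁.IsPrime → Q₂.IsPrime →
        Q₁.comap R.subtype = Q₂.comap R.subtype → Q₁ = Q₂) → R = ⊤) ∧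
    -- (2) if `R ⊆ S` is u-closed then `R = S`
    ((∀ b : S, b ^ 2 - b ∈ R → b ^ 3 - b ^ 2 ∈ R → b ∈ R) → R = ⊤) ∧
    -- (3) if `2` is a unit of `S` then `R = S`
    (IsUnit (2 : S) → R = ⊤) := by
  refine ⟨?_, ?_, ?_⟩
  · -- (1)
    intro hinj
    apply SL_top_of_idem R hSL hvnr
    intro e he
    by_contra heR
    have hne : Ideal.comap R.subtype (Ideal.span {e}) ⊔
        Ideal.comap R.subtype (Ideal.span {1 - e}) ≠ (⊤ : Ideal R) := by
      intro htop
      have h1 : (1 : R) ∈ Ideal.comap R.subtype (Ideal.span {e}) ⊔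
          Ideal.comap R.subtype (Ideal.span {1 - e}) := htop ▸ Submodule.mem_top
      obtain ⟨a, ha, b, hb, hab⟩ := Submodule.mem_sup.mp h1
      rw [Ideal.mem_comap, Ideal.mem_span_singleton] at ha hb
      obtain ⟨s, hs⟩ := ha
      obtain ⟨t, ht⟩ := hb
      simp only [Subring.coe_subtype] at hs ht
      have h1' : (a : S) + (b : S) = 1 := by exact_mod_cast congrArg (Subtype.val) hab
      have hea : e * (a : S) = (a : S) := by rw [hs]; linear_combination s * he
      have heb : e * (b : S) = 0 := by rw [ht]; linear_combination (-t) * he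
      have hEa : e = (a : S) := by linear_combination (-e) * h1' + hea + heb
      exact heR (hEa ▸ a.2)
    obtain ⟨m, hm, hle⟩ := Ideal.exists_le_maximal _ hne
    haveI := hm
    have hint := SL_integral R hSL hvnr
    obtain ⟨Q₁, hQ₁, hJ₁, hc₁⟩ := exists_prime_over R hint (Ideal.span {e}) m
      (le_trans le_sup_left hle)
    obtain ⟨Q₂, hQ₂, hJ₂, hc₂⟩ := exists_prime_over R hint (Ideal.span {1 - e}) m
      (le_trans le_sup_right hle)
    have heq : Q₁ = Q₂ := hinj Q₁ Q₂ hQ₁ hQ₂ (by rw [hc₁, hc₂])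
    have he₁ : e ∈ Q₂ := heq ▸ hJ₁ (Ideal.mem_span_singleton_self e)
    have he₂ : (1 : S) - e ∈ Q₂ := hJ₂ (Ideal.mem_span_singleton_self _)
    have : (1 : S) ∈ Q₂ := by simpa using Q₂.add_mem he₁ he₂
    exact hQ₂.ne_top ((Ideal.eq_top_iff_one _).mpr this)
  · -- (2)
    intro huc
    apply SL_top_of_idem R hSL hvnr
    intro e he
    apply huc e
    · have : e ^ 2 - e = 0 := by linear_combination he
      rw [this]; exact R.zero_mem
    · have : e ^ 3 - e ^ 2 = 0 := by linear_combination e * he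
      rw [this]; exact R.zero_mem
  · -- (3)
    intro h2
    apply SL_top_of_idem R hSL hvnr
    intro e he
    obtain ⟨c, hc⟩ := h2
    have hw : (2 : S) * ↑c⁻¹ = 1 := by rw [← hc]; exact c.mul_inv
    have hwR : (↑c⁻¹ : S) ∈ R := (hSL _ _ hw).2
    have htR : e + e - 1 ∈ R := (hSL (e + e - 1) (e + e - 1) (by linear_combination 4 * he)).1
    have hE : e = (↑c⁻¹ : S) * ((e + e - 1) + 1) := by linear_combination (-e) * hw
    rw [hE]
    exact R.mul_mem hwR (R.add_mem htR R.one_mem)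
end

section
/- A ring extension R ⊆ S of commutative rings is strongly local if and only if Nil(R) = Nil(S) (every nilpotent element of S lies in R) and the induced extension R/Nil(R) ⊆ S/Nil(S) of the reductions modulo the nilradicals is strongly local. -/
theorem SL_iff_SL_modulo_nilradical {S : Type*} [CommRing S] (R : Subring S) :
    R.IsSLExt ↔
      ((∀ x : S, IsNilpotent x → x ∈ R) ∧
        (R.map (Ideal.Quotient.mk (nilradical S))).IsSLExt) := by
  constructor
  · intro h
    constructor
    · intro x hx
      have hu : IsUnit (1 + x) := hx.isUnit_one_add
      obtain ⟨u, hu⟩ := hu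
      have := (h (1 + x) ↑u⁻¹ (by rw [← hu]; exact u.mul_inv)).1
      have h1 : (1 : S) ∈ R := R.one_mem
      simpa using R.sub_mem this h1
    · intro x y hxy
      obtain ⟨a, rfl⟩ := Ideal.Quotient.mk_surjective x
      obtain ⟨b, rfl⟩ := Ideal.Quotient.mk_surjective y
      have : Ideal.Quotient.mk (nilradical S) (a * b) = Ideal.Quotient.mk (nilradical S) 1 := by
        simpa using hxy
      have hn : IsNilpotent (a * b - 1) := Ideal.Quotient.eq.mp this
      have hu : IsUnit (a * b) := by
        have : a * b = 1 + (a * b - 1) := by ring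
        rw [this]
        exact hn.isUnit_one_add
      obtain ⟨u, hu⟩ := hu
      have ha : a ∈ R := (h a (b * ↑u⁻¹) (by rw [← mul_assoc, ← hu]; exact u.mul_inv)).1
      have hb : b ∈ R := (h b (a * ↑u⁻¹) (by rw [← mul_assoc, mul_comm b a, ← hu]; exact u.mul_inv)).1
      exact ⟨⟨a, ha, rfl⟩, ⟨b, hb, rfl⟩⟩
  · rintro ⟨hnil, hq⟩ x y hxy
    have key : ∀ z : S, (Ideal.Quotient.mk (nilradical S) z) ∈
        R.map (Ideal.Quotient.mk (nilradical S)) → z ∈ R := by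
      rintro z ⟨r, hr, hrz⟩
      have : IsNilpotent (z - r) := Ideal.Quotient.eq.mp hrz.symm
      have hzr : z - r ∈ R := hnil _ this
      simpa using R.add_mem hzr hr
    have hq' := hq (Ideal.Quotient.mk (nilradical S) x) (Ideal.Quotient.mk (nilradical S) y)
      (by rw [← map_mul, hxy, map_one])
    exact ⟨key x hq'.1, key y hq'.2⟩
end

section
/- Let I be a semiprime (radical) ideal of a commutative ring R, let a, b ∈ R be units of R, and let f(X), g(X) ∈ R[X] be polynomials such that a·f(X) + b·g(X) + X·f(X)·g(X) ∈ I[X], where I[X] denotes the ideal of R[X] of polynomials all of whose coefficients lie in I. Then f(X) ∈ I[X] and g(X) ∈ I[X]. -/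
open Polynomial

lemma cohn_aux_domain {S : Type*} [CommRing S] [IsDomain S] (a b : S)
    (ha : IsUnit a) (hb : IsUnit b) (f g : Polynomial S)
    (h : C a * f + C b * g + X * f * g = 0) : f = 0 ∧ g = 0 := by
  have ha0 : (C a : Polynomial S) ≠ 0 := by
    simpa using ha.ne_zero
  have hb0 : (C b : Polynomial S) ≠ 0 := by
    simpa using hb.ne_zero
  by_cases hf : f = 0
  · subst hf
    simp only [mul_zero, zero_add, add_zero, X_mul, zero_mul, mul_zero] at h
    rcases mul_eq_zero.mp h with h' | h'
    · exact absurd h' hb0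
    · exact ⟨rfl, h'⟩
  by_cases hg : g = 0
  · subst hg
    simp only [mul_zero, add_zero, zero_mul] at h
    rcases mul_eq_zero.mp h with h' | h'
    · exact absurd h' ha0
    · exact ⟨h', rfl⟩
  exfalso
  have heq : X * f * g = -(C a * f + C b * g) := by linear_combination h
  have hX : (X : Polynomial S) ≠ 0 := X_ne_zero
  have hXf : X * f ≠ 0 := mul_ne_zero hX hf
  have hdeg1 : (X * f * g).natDegree = 1 + f.natDegree + g.natDegree := by
    rw [natDegree_mul hXf hg, natDegree_mul hX hf, natDegree_X]
  have hdaf : (C a * f).natDegree = f.natDegree := by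
    rw [natDegree_mul ha0 hf, natDegree_C, zero_add]
  have hdbg : (C b * g).natDegree = g.natDegree := by
    rw [natDegree_mul hb0 hg, natDegree_C, zero_add]
  have hdeg2 : (X * f * g).natDegree ≤ max f.natDegree g.natDegree := by
    rw [heq, natDegree_neg]
    calc (C a * f + C b * g).natDegree ≤ max (C a * f).natDegree (C b * g).natDegree :=
          natDegree_add_le _ _
      _ = max f.natDegree g.natDegree := by rw [hdaf, hdbg]
  rw [hdeg1] at hdeg2
  omega

theorem cohn_lemma_on_radical_ideals {R : Type*} [CommRing R] (I : Ideal R)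
    (hI : I.IsRadical) (a b : R) (ha : IsUnit a) (hb : IsUnit b)
    (f g : Polynomial R)
    (h : C a * f + C b * g + X * f * g ∈ I.map (C : R →+* Polynomial R)) :
    f ∈ I.map (C : R →+* Polynomial R) ∧ g ∈ I.map (C : R →+* Polynomial R) := by
  rw [Ideal.mem_map_C_iff] at h
  have main : ∀ p : Ideal R, I ≤ p → p.IsPrime →
      (∀ n, f.coeff n ∈ p) ∧ (∀ n, g.coeff n ∈ p) := by
    intro p hIp hp
    haveI := hp
    set φ := Ideal.Quotient.mk p with hφ
    have hmap : (C a * f + C b * g + X * f * g).map φ = 0 := by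
      ext n
      rw [coeff_map, coeff_zero, Ideal.Quotient.eq_zero_iff_mem]
      exact hIp (h n)
    simp only [Polynomial.map_add, Polynomial.map_mul, Polynomial.map_C,
      Polynomial.map_X] at hmap
    obtain ⟨hf0, hg0⟩ := cohn_aux_domain (φ a) (φ b) (ha.map φ) (hb.map φ) _ _ hmap
    constructor <;> intro n
    · have := congrArg (fun q => Polynomial.coeff q n) hf0
      simp only [coeff_map, coeff_zero] at this
      exact (Ideal.Quotient.eq_zero_iff_mem).mp this
    · have := congrArg (fun q => Polynomial.coeff q n) hg0
      simp only [coeff_map, coeff_zero] at this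
      exact (Ideal.Quotient.eq_zero_iff_mem).mp this
  have hI' : I.radical = I := hI.radical
  have coeffmem : ∀ x : R, (∀ p : Ideal R, I ≤ p → p.IsPrime → x ∈ p) → x ∈ I := by
    intro x hx
    rw [← hI', Ideal.radical_eq_sInf, Ideal.mem_sInf]
    rintro p ⟨hIp, hp⟩
    exact hx p hIp hp
  constructor <;> rw [Ideal.mem_map_C_iff] <;> intro n <;> apply coeffmem
  · exact fun p hIp hp => (main p hIp hp).1 n
  · exact fun p hIp hp => (main p hIp hp).2 n
end

section
/- For every commutative ring R there exist a commutative ring S and an injective ring homomorphism f : R → S such that: f is strongly local (f(U(R)) = U(S)); every non-unit of S is a zero divisor of S; the extension f(R) ⊆ S is t-closed (every y ∈ S for which there exists r ∈ R with y² − f(r)·y ∈ f(R) and y³ − f(r)·y² ∈ f(R) lies in f(R)); and if R is reduced then S is reduced. -/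
universe u
universe v

open MvPolynomial in
theorem mv_isUnit_fin {D : Type v} [CommRing D] [NoZeroDivisors D] :
    ∀ (n : ℕ) (g : MvPolynomial (Fin n) D), IsUnit g → ∃ d : D, IsUnit d ∧ C d = g
  | 0, g, hg => by
    let e := MvPolynomial.isEmptyAlgEquiv D (Fin 0)
    refine ⟨e g, hg.map e, ?_⟩
    have : (C (e g) : MvPolynomial (Fin 0) D) = e.symm (algebraMap D D (e g)) := by
      rw [AlgEquiv.commutes]; rfl
    simpa using this.trans (by simp)
  | n + 1, g, hg => by
    let e := MvPolynomial.finSuccEquiv D n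
    have hu : IsUnit (e g) := hg.map e
    obtain ⟨r, hr, hCr⟩ := Polynomial.isUnit_iff.mp hu
    obtain ⟨d, hd, hCd⟩ := mv_isUnit_fin n r hr
    refine ⟨d, hd, ?_⟩
    have h1 : Polynomial.C (C d : MvPolynomial (Fin n) D)
        = algebraMap D (Polynomial (MvPolynomial (Fin n) D)) d := rfl
    have h2 : (C d : MvPolynomial (Fin (n+1)) D) = e.symm (e g) := by
      rw [← hCr, ← hCd, h1, AlgEquiv.commutes e.symm d]
      rfl
    simpa using h2

open MvPolynomial in
theorem mv_isUnit {σ : Type v} {D : Type v} [CommRing D] [NoZeroDivisors D]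
    {g : MvPolynomial σ D} (hg : IsUnit g) : ∃ d : D, IsUnit d ∧ C d = g := by
  obtain ⟨h, hgh⟩ := hg.exists_right_inv
  obtain ⟨s, q₁, q₂, rfl, rfl⟩ := exists_finset_rename₂ g h
  have hinj : Function.Injective (rename (R := D) ((↑) : s → σ)) :=
    rename_injective _ Subtype.val_injective
  have h1 : q₁ * q₂ = 1 := by
    apply hinj; rw [map_mul, map_one]; exact hgh
  let e := MvPolynomial.renameEquiv D (Fintype.equivFin s)
  have hu : IsUnit (e q₁) := IsUnit.of_mul_eq_one (e q₂) (by rw [← map_mul, h1, map_one])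
  obtain ⟨d, hd, hCd⟩ := mv_isUnit_fin _ _ hu
  refine ⟨d, hd, ?_⟩
  have : (q₁ : MvPolynomial s D) = C d := by
    have : e.symm (C d) = q₁ := by rw [hCd]; exact e.symm_apply_apply q₁
    rw [← this]
    simp [e, renameEquiv]
  rw [this, rename_C]

noncomputable section StepSec

attribute [local instance] Classical.propDecidable

open MvPolynomial

variable (T : Type u) [CommRing T]

/-- Polynomial ring with one variable for each nonunit of `T`. -/
abbrev StepPoly := MvPolynomial {a : T // ¬ IsUnit a} T

/-- Projection to `T` (kill all variables). -/
def zeroHom : StepPoly T →+* T := MvPolynomial.eval (fun _ => 0)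

/-- For each prime `p`, projection to a polynomial ring over the domain `T ⧸ p`,
keeping only the variables `X a` with `a ∈ p`. -/
def piHom (p : PrimeSpectrum T) :
    StepPoly T →+* MvPolynomial {a : T // ¬ IsUnit a} (T ⧸ p.asIdeal) :=
  MvPolynomial.eval₂Hom ((C : (T ⧸ p.asIdeal) →+* _).comp (Ideal.Quotient.mk p.asIdeal))
    (fun a => if (a : T) ∈ p.asIdeal then X a else 0)

/-- All projections together. -/
def PhiHom : StepPoly T →+*
    T × ((p : PrimeSpectrum T) → MvPolynomial {a : T // ¬ IsUnit a} (T ⧸ p.asIdeal)) :=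
  (zeroHom T).prod (Pi.ringHom (piHom T))

/-- The step extension of `T`. -/
def Step : Type u := StepPoly T ⧸ RingHom.ker (PhiHom T)

instance : CommRing (Step T) := Ideal.Quotient.commRing _

def stepMk : StepPoly T →+* Step T := Ideal.Quotient.mk _

def stepι : T →+* Step T := (stepMk T).comp (C : T →+* StepPoly T)

def stepLift : Step T →+*
    T × ((p : PrimeSpectrum T) → MvPolynomial {a : T // ¬ IsUnit a} (T ⧸ p.asIdeal)) :=
  RingHom.kerLift (PhiHom T)

lemma stepLift_injective : Function.Injective (stepLift T) := RingHom.kerLift_injective _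

def stepρ : Step T →+* T := (RingHom.fst _ _).comp (stepLift T)

def stepπ (p : PrimeSpectrum T) :
    Step T →+* MvPolynomial {a : T // ¬ IsUnit a} (T ⧸ p.asIdeal) :=
  (Pi.evalRingHom _ p).comp ((RingHom.snd _ _).comp (stepLift T))

variable {T}

lemma stepMk_surjective : Function.Surjective (stepMk T) :=
  Ideal.Quotient.mk_surjective

lemma stepMk_eq_zero {f : StepPoly T} (h : PhiHom T f = 0) : stepMk T f = 0 :=
  Ideal.Quotient.eq_zero_iff_mem.mpr (RingHom.mem_ker.mpr h)

lemma phi_of_stepMk_eq_zero {f : StepPoly T} (h : stepMk T f = 0) : PhiHom T f = 0 :=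
  RingHom.mem_ker.mp (Ideal.Quotient.eq_zero_iff_mem.mp h)

lemma stepLift_mk (f : StepPoly T) : stepLift T (stepMk T f) = PhiHom T f :=
  RingHom.kerLift_mk _ _

lemma PhiHom_fst (f : StepPoly T) : (PhiHom T f).1 = zeroHom T f := rfl

lemma PhiHom_snd (f : StepPoly T) (p : PrimeSpectrum T) :
    (PhiHom T f).2 p = piHom T p f := rfl

lemma stepρ_mk (f : StepPoly T) : stepρ T (stepMk T f) = zeroHom T f := by
  show (stepLift T (stepMk T f)).1 = _
  rw [stepLift_mk, PhiHom_fst]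

lemma stepπ_mk (p : PrimeSpectrum T) (f : StepPoly T) :
    stepπ T p (stepMk T f) = piHom T p f := by
  show (stepLift T (stepMk T f)).2 p = _
  rw [stepLift_mk, PhiHom_snd]

lemma zeroHom_C (t : T) : zeroHom T (C t) = t := by simp [zeroHom]

lemma piHom_C (p : PrimeSpectrum T) (t : T) :
    piHom T p (C t) = C (Ideal.Quotient.mk p.asIdeal t) := by simp [piHom]

lemma piHom_X (p : PrimeSpectrum T) (a : {a : T // ¬ IsUnit a}) :
    piHom T p (X a) = if (a : T) ∈ p.asIdeal then X a else 0 := by simp [piHom]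

lemma stepρ_ι (t : T) : stepρ T (stepι T t) = t := by
  show stepρ T (stepMk T (C t)) = t
  rw [stepρ_mk, zeroHom_C]

lemma stepπ_ι (p : PrimeSpectrum T) (t : T) :
    stepπ T p (stepι T t) = C (Ideal.Quotient.mk p.asIdeal t) := by
  show stepπ T p (stepMk T (C t)) = _
  rw [stepπ_mk, piHom_C]

lemma stepι_injective : Function.Injective (stepι T) := by
  intro a b h
  have := congrArg (stepρ T) h
  simpa [stepρ_ι] using this

/-- Evaluation at zero intertwines `piHom` and `zeroHom`. -/
lemma eval_zero_piHom (p : PrimeSpectrum T) (f : StepPoly T) :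
    MvPolynomial.eval (fun _ => (0 : T ⧸ p.asIdeal)) (piHom T p f)
      = Ideal.Quotient.mk p.asIdeal (zeroHom T f) := by
  have : ((MvPolynomial.eval (fun _ => (0 : T ⧸ p.asIdeal))).comp (piHom T p))
      = (Ideal.Quotient.mk p.asIdeal).comp (zeroHom T) := by
    apply MvPolynomial.ringHom_ext
    · intro r
      simp [piHom_C, zeroHom_C]
    · intro a
      by_cases h : (a : T) ∈ p.asIdeal <;>
        simp [RingHom.comp_apply, piHom_X, zeroHom, h]
  exact RingHom.congr_fun this f

/-- If all prime projections of `y` are constants, then `y` comes from `T`. -/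
lemma step_eq_iota {y : Step T} (h : ∀ p : PrimeSpectrum T, ∃ c, stepπ T p y = C c) :
    y = stepι T (stepρ T y) := by
  obtain ⟨f, rfl⟩ := stepMk_surjective (T := T) y
  rw [stepρ_mk]
  apply stepLift_injective T
  apply Prod.ext
  · show (stepLift T (stepMk T f)).1 = (stepLift T (stepMk T (C (zeroHom T f)))).1
    rw [stepLift_mk, stepLift_mk, PhiHom_fst, PhiHom_fst, zeroHom_C]
  · funext p
    obtain ⟨c, hc⟩ := h p
    have hc' : piHom T p f = C c := by rw [← stepπ_mk]; exact hc
    have hcval : c = Ideal.Quotient.mk p.asIdeal (zeroHom T f) := by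
      have := eval_zero_piHom p f
      rw [hc'] at this
      simpa using this
    show (stepLift T (stepMk T f)).2 p = (stepLift T (stepMk T (C (zeroHom T f)))).2 p
    rw [stepLift_mk, stepLift_mk, PhiHom_snd, PhiHom_snd, piHom_C, hc', hcval]

/-- Strong locality of the step: every unit of `Step T` comes from a unit of `T`. -/
lemma step_isUnit {u : Step T} (hu : IsUnit u) : ∃ t : T, IsUnit t ∧ stepι T t = u := by
  have hconst : ∀ p : PrimeSpectrum T, ∃ c, stepπ T p u = C c := by
    intro p
    haveI := p.isPrime
    obtain ⟨d, _, hd⟩ := mv_isUnit (hu.map (stepπ T p))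
    exact ⟨d, hd.symm⟩
  exact ⟨stepρ T u, hu.map (stepρ T), (step_eq_iota hconst).symm⟩

lemma step_killer {a : T} (ha : ¬ IsUnit a) :
    stepι T a * stepMk T (X ⟨a, ha⟩) = 0 ∧ stepMk T (X ⟨a, ha⟩) ≠ 0 := by
  constructor
  · have h1 : stepι T a * stepMk T (X ⟨a, ha⟩) = stepMk T (C a * X ⟨a, ha⟩) :=
      (map_mul (stepMk T) _ _).symm
    rw [h1]
    apply stepMk_eq_zero
    apply Prod.ext
    · rw [PhiHom_fst]
      simp [zeroHom]
    · funext p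
      rw [PhiHom_snd]
      rw [map_mul, piHom_C, piHom_X]
      by_cases h : a ∈ p.asIdeal
      · rw [Ideal.Quotient.eq_zero_iff_mem.mpr h, map_zero, zero_mul]
        rfl
      · rw [if_neg h, mul_zero]
        rfl
  · intro h0
    have hmem := phi_of_stepMk_eq_zero h0
    obtain ⟨m, hm, ham⟩ := Ideal.exists_le_maximal (Ideal.span {a})
      (by rwa [Ne, Ideal.span_singleton_eq_top])
    haveI := hm.isPrime
    have hap : a ∈ m := ham (Ideal.subset_span rfl)
    have h2 : (PhiHom T (X ⟨a, ha⟩)).2 ⟨m, hm.isPrime⟩ = 0 := by rw [hmem]; rfl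
    rw [PhiHom_snd, piHom_X, if_pos hap] at h2
    exact MvPolynomial.X_ne_zero _ h2

/-- t-closedness of the step extension. -/
lemma step_tclosed {y : Step T} (r : T)
    (h1 : y ^ 2 - stepι T r * y ∈ Set.range (stepι T))
    (h2 : y ^ 3 - stepι T r * y ^ 2 ∈ Set.range (stepι T)) :
    y ∈ Set.range (stepι T) := by
  obtain ⟨s, hs⟩ := h1
  obtain ⟨t, ht⟩ := h2
  have hconst : ∀ p : PrimeSpectrum T, ∃ c, stepπ T p y = C c := by
    intro p
    haveI := p.isPrime
    set b := stepπ T p y with hb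
    set rr := Ideal.Quotient.mk p.asIdeal r with hrr
    set ss := Ideal.Quotient.mk p.asIdeal s with hss0
    set tt := Ideal.Quotient.mk p.asIdeal t with htt0
    have e1 : C ss = b ^ 2 - C rr * b := by
      have := congrArg (stepπ T p) hs
      simpa [map_sub, map_pow, map_mul, stepπ_ι] using this
    have e2 : C tt = b ^ 3 - C rr * b ^ 2 := by
      have := congrArg (stepπ T p) ht
      simpa [map_sub, map_pow, map_mul, stepπ_ι] using this
    by_cases hss : ss = 0
    · have hz : b * (b - C rr) = 0 := by
        have h0 : b ^ 2 - C rr * b = 0 := by rw [← e1, hss, map_zero]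
        linear_combination h0
      rcases mul_eq_zero.mp hz with h | h
      · exact ⟨0, by rw [h, map_zero]⟩
      · exact ⟨rr, by rw [sub_eq_zero] at h; exact h⟩
    · have hmul : C ss * b = C tt := by
        have h3 : b * (b ^ 2 - C rr * b) = b ^ 3 - C rr * b ^ 2 := by ring
        rw [← e1] at h3
        rw [e2, ← h3]; ring
      refine ⟨MvPolynomial.coeff 0 b, ?_⟩
      classical
      ext m
      rw [MvPolynomial.coeff_C]
      by_cases hm : m = 0
      · subst hm; simp
      · have hco := congrArg (MvPolynomial.coeff m) hmul
        rw [MvPolynomial.coeff_C_mul, MvPolynomial.coeff_C,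
          if_neg (fun h => hm h.symm)] at hco
        have hbm : MvPolynomial.coeff m b = 0 := by
          rcases mul_eq_zero.mp hco with h | h
          · exact absurd h hss
          · exact h
        rw [if_neg (fun h => hm h.symm), hbm]
  exact ⟨stepρ T y, (step_eq_iota hconst).symm⟩

lemma step_reduced (hT : IsReduced T) : IsReduced (Step T) := by
  constructor
  intro x hx
  obtain ⟨n, hn⟩ := hx
  apply stepLift_injective T
  rw [map_zero]
  have hnil : (stepLift T x) ^ n = 0 := by rw [← map_pow, hn, map_zero]
  apply Prod.ext
  · have h1 : (stepLift T x).1 ^ n = 0 := by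
      have := congrArg Prod.fst hnil; simpa using this
    exact hT.eq_zero _ ⟨n, h1⟩
  · funext p
    haveI := p.isPrime
    have h2 : ((stepLift T x).2 p) ^ n = 0 := by
      have := congrArg (fun z => z.2 p) hnil; simpa using this
    simpa using IsReduced.eq_zero _ ⟨n, h2⟩

end StepSec
section ChainSec

variable (R : Type u) [CommRing R]

structure RingPack : Type (u + 1) where
  carrier : Type u
  str : CommRing carrier

attribute [instance] RingPack.str

/-- The chain `R, Step R, Step (Step R), …`. -/
@[reducible] noncomputable def chain : ℕ → RingPack.{u} :=
  fun n => Nat.rec ⟨R, ‹_›⟩ (fun _ ih => ⟨Step ih.carrier, inferInstance⟩) n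

abbrev ChainG (n : ℕ) : Type u := (chain R n).carrier

/-- Transition maps of the chain. -/
noncomputable def chainTr : ∀ {n m : ℕ}, n ≤ m → (ChainG R n →+* ChainG R m) :=
  fun {n m} h =>
    Nat.leRecOn h (fun {k} g => (stepι (ChainG R k)).comp g) (RingHom.id (ChainG R n))

lemma chainTr_self (n : ℕ) : chainTr R (le_refl n) = RingHom.id (ChainG R n) :=
  Nat.leRecOn_self _

lemma chainTr_succ {n m : ℕ} (h : n ≤ m) {h2 : n ≤ m + 1} :
    chainTr R h2 = (stepι (ChainG R m)).comp (chainTr R h) :=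
  Nat.leRecOn_succ h _

lemma chainTr_succ_apply {n m : ℕ} (h : n ≤ m) {h2 : n ≤ m + 1} (x : ChainG R n) :
    chainTr R h2 x = stepι (ChainG R m) (chainTr R h x) := by
  rw [chainTr_succ R h (h2 := h2)]; rfl

lemma chainTr_trans {n m k : ℕ} (h1 : n ≤ m) (h2 : m ≤ k) (x : ChainG R n) :
    chainTr R h2 (chainTr R h1 x) = chainTr R (h1.trans h2) x := by
  induction k, h2 using Nat.le_induction with
  | base => rw [chainTr_self]; rfl
  | succ k hk ih =>
    rw [chainTr_succ_apply R hk, chainTr_succ_apply R (h1.trans hk), ih]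

lemma chainTr_injective : ∀ {n m : ℕ} (h : n ≤ m), Function.Injective (chainTr R h) := by
  intro n m h
  induction m, h using Nat.le_induction with
  | base => rw [chainTr_self]; exact fun a b h => h
  | succ m hm ih =>
    rw [chainTr_succ R hm (h2 := hm.trans m.le_succ)]
    exact (stepι_injective).comp ih

/-- Every unit at any level of the chain comes from a unit at level 0. -/
lemma chain_unit_descends : ∀ (n : ℕ) (x : ChainG R n), IsUnit x →
    ∃ u : ChainG R 0, IsUnit u ∧ chainTr R (Nat.zero_le n) u = x := by
  intro n
  induction n with
  | zero =>
    intro x hx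
    exact ⟨x, hx, by rw [chainTr_self]; rfl⟩
  | succ n ih =>
    intro x hx
    obtain ⟨t, ht, hts⟩ := step_isUnit (T := ChainG R n) hx
    obtain ⟨u, hu, hut⟩ := ih t ht
    refine ⟨u, hu, ?_⟩
    rw [chainTr_succ_apply R (Nat.zero_le n), hut]
    exact hts

/-- The range of `chainTr 0 n` is t-closed at each level. -/
lemma chain_tclosed : ∀ (n : ℕ) (b : ChainG R n) (r : ChainG R 0),
    b ^ 2 - chainTr R (Nat.zero_le n) r * b ∈ Set.range (chainTr R (Nat.zero_le n)) →
    b ^ 3 - chainTr R (Nat.zero_le n) r * b ^ 2 ∈ Set.range (chainTr R (Nat.zero_le n)) →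
    b ∈ Set.range (chainTr R (Nat.zero_le n)) := by
  intro n
  induction n with
  | zero =>
    intro b r _ _
    exact ⟨b, by rw [chainTr_self]; rfl⟩
  | succ n ih =>
    intro b r h1 h2
    set ι0 := chainTr R (Nat.zero_le n) with hι0
    have hr : chainTr R (Nat.zero_le (n + 1)) r = stepι (ChainG R n) (ι0 r) :=
      chainTr_succ_apply R (Nat.zero_le n) r
    have h1' : b ^ 2 - stepι (ChainG R n) (ι0 r) * b
        ∈ Set.range (stepι (ChainG R n)) := by
      obtain ⟨w, hw⟩ := h1
      exact ⟨ι0 w, by rw [← chainTr_succ_apply R (Nat.zero_le n) (h2 := Nat.zero_le _), hw, hr]⟩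
    have h2' : b ^ 3 - stepι (ChainG R n) (ι0 r) * b ^ 2
        ∈ Set.range (stepι (ChainG R n)) := by
      obtain ⟨w, hw⟩ := h2
      exact ⟨ι0 w, by rw [← chainTr_succ_apply R (Nat.zero_le n) (h2 := Nat.zero_le _), hw, hr]⟩
    obtain ⟨c, hc⟩ := step_tclosed (ι0 r) h1' h2'
    obtain ⟨s1, hs1⟩ := h1
    obtain ⟨s2, hs2⟩ := h2
    have hd1 : c ^ 2 - ι0 r * c ∈ Set.range ι0 := by
      refine ⟨s1, stepι_injective ?_⟩
      rw [map_sub, map_pow, map_mul, hc, ← chainTr_succ_apply R (Nat.zero_le n) (h2 := Nat.zero_le _), hs1, hr]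
    have hd2 : c ^ 3 - ι0 r * c ^ 2 ∈ Set.range ι0 := by
      refine ⟨s2, stepι_injective ?_⟩
      rw [map_sub, map_pow, map_mul, map_pow, hc,
        ← chainTr_succ_apply R (Nat.zero_le n) (h2 := Nat.zero_le _), hs2, hr]
    obtain ⟨w, hw⟩ := ih c r hd1 hd2
    exact ⟨w, by rw [chainTr_succ_apply R (Nat.zero_le n), hw, hc]⟩

lemma chain_reduced (hR : IsReduced R) : ∀ n : ℕ, IsReduced (ChainG R n) := by
  intro n
  induction n with
  | zero => exact hR
  | succ n ih => exact step_reduced (T := ChainG R n) ih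

end ChainSec
section LimitSec

variable (R : Type u) [CommRing R]

instance chainDirSys : DirectedSystem (ChainG R) (fun i j h => chainTr R h) where
  map_self := fun i x => by rw [chainTr_self]; rfl
  map_map := fun {k j i} hij hjk x => chainTr_trans R hij hjk x

/-- The limit ring. -/
noncomputable def LimS : Type u :=
  Ring.DirectLimit (ChainG R) (fun i j h => chainTr R h)

noncomputable instance : CommRing (LimS R) :=
  inferInstanceAs (CommRing (Ring.DirectLimit (ChainG R) (fun i j h => chainTr R h)))

noncomputable def limOf (i : ℕ) : ChainG R i →+* LimS R :=
  Ring.DirectLimit.of (ChainG R) (fun i j h => chainTr R h) i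

variable {R}

lemma limOf_f {i j : ℕ} (h : i ≤ j) (x : ChainG R i) :
    limOf R j (chainTr R h x) = limOf R i x :=
  Ring.DirectLimit.of_f h x

lemma limOf_injective (i : ℕ) : Function.Injective (limOf R i) :=
  Ring.DirectLimit.of_injective (fun i j h => chainTr R h)
    (fun _ _ h => chainTr_injective R h) i

lemma lim_exists (z : LimS R) : ∃ i x, limOf R i x = z :=
  Ring.DirectLimit.exists_of z

lemma lim_zero_exact {i : ℕ} {x : ChainG R i} (h : limOf R i x = 0) :
    ∃ (j : ℕ) (hij : i ≤ j), chainTr R hij x = 0 :=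
  Ring.DirectLimit.of.zero_exact h

lemma lim_eq_exact {i j : ℕ} {x : ChainG R i} {y : ChainG R j}
    (h : limOf R i x = limOf R j y) :
    ∃ (k : ℕ) (hik : i ≤ k) (hjk : j ≤ k), chainTr R hik x = chainTr R hjk y := by
  have hik0 : i ≤ max i j := le_max_left i j
  have hjk0 : j ≤ max i j := le_max_right i j
  have h0 : limOf R (max i j) (chainTr R hik0 x - chainTr R hjk0 y) = 0 := by
    rw [map_sub, limOf_f, limOf_f, h, sub_self]
  obtain ⟨k, hk, hk0⟩ := lim_zero_exact h0
  rw [map_sub, sub_eq_zero] at hk0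
  exact ⟨k, hik0.trans hk, hjk0.trans hk, by
    rw [chainTr_trans, chainTr_trans] at hk0; exact hk0⟩

end LimitSec


theorem exists_SL_extension_nonunits_zerodivisors (R : Type u) [CommRing R] :
    ∃ (S : Type u) (_ : CommRing S) (f : R →+* S),
      -- `f` is injective (an extension)
      Function.Injective f ∧
      -- `f` is strongly local: `f(U(R)) = U(S)`
      f '' {x : R | IsUnit x} = {y : S | IsUnit y} ∧
      -- every non-unit of `S` is a zero divisor of `S`
      (∀ s : S, ¬ IsUnit s → ∃ t : S, t ≠ 0 ∧ s * t = 0) ∧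
      -- the extension `f(R) ⊆ S` is t-closed
      (∀ y : S, (∃ r : R, y ^ 2 - f r * y ∈ Set.range f ∧
          y ^ 3 - f r * y ^ 2 ∈ Set.range f) → y ∈ Set.range f) ∧
      -- if `R` is reduced then so is `S`
      (IsReduced R → IsReduced S) := by
  classical
  refine ⟨LimS R, inferInstance, limOf R 0, ?_, ?_, ?_, ?_, ?_⟩
  · -- injectivity
    exact limOf_injective 0
  · -- strongly local
    apply Set.ext
    intro y
    constructor
    · rintro ⟨x, hx, rfl⟩
      exact hx.map (limOf R 0)
    · intro hy
      obtain ⟨n, x, rfl⟩ := lim_exists y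
      obtain ⟨v, hv⟩ := hy.exists_right_inv
      obtain ⟨m, z, hz⟩ := lim_exists v
      rw [← hz] at hv
      have h1 : limOf R n x * limOf R m z = limOf R 0 1 := by rw [hv, map_one]
      rw [show limOf R n x * limOf R m z
          = limOf R (max n m) (chainTr R (le_max_left n m) x *
            chainTr R (le_max_right n m) z) by rw [map_mul, limOf_f, limOf_f]] at h1
      obtain ⟨k, hk1, hk2, hk3⟩ := lim_eq_exact h1
      rw [map_mul, chainTr_trans, chainTr_trans, map_one] at hk3
      have hux : IsUnit (chainTr R ((le_max_left n m).trans hk1) x) :=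
        IsUnit.of_mul_eq_one _ hk3
      obtain ⟨u, hu, huk⟩ := chain_unit_descends R k _ hux
      refine ⟨u, hu, ?_⟩
      have hfin : limOf R 0 u = limOf R n x := by
        rw [← limOf_f (Nat.zero_le k) u, huk, limOf_f]
      exact hfin
  · -- nonunits are zero divisors
    intro s hs
    obtain ⟨n, x, rfl⟩ := lim_exists s
    have hx : ¬ IsUnit x := fun h => hs (h.map (limOf R n))
    obtain ⟨hk1, hk2⟩ := step_killer (T := ChainG R n) hx
    refine ⟨limOf R (n + 1) (stepMk (ChainG R n) (MvPolynomial.X ⟨x, hx⟩)), ?_, ?_⟩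
    · intro h0
      exact hk2 (limOf_injective (n + 1) (by rw [h0, map_zero]))
    · have hstep : limOf R n x = limOf R (n + 1) (stepι (ChainG R n) x) := by
        rw [← limOf_f (n.le_succ) x, chainTr_succ_apply R (le_refl n), chainTr_self]
        rfl
      rw [hstep, ← map_mul, hk1, map_zero]
  · -- t-closed
    intro y ⟨r, ⟨s1, hs1⟩, ⟨s2, hs2⟩⟩
    obtain ⟨n, x, rfl⟩ := lim_exists y
    have hs1' : limOf R 0 s1 = limOf R n x ^ 2 - limOf R 0 r * limOf R n x := hs1
    have hs2' : limOf R 0 s2 = limOf R n x ^ 3 - limOf R 0 r * limOf R n x ^ 2 := hs2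
    have hsq : limOf R 0 s1
        = limOf R n (x ^ 2 - chainTr R (Nat.zero_le n) r * x) := by
      rw [hs1']
      simp only [map_sub, map_pow, map_mul, limOf_f]
    have hcb : limOf R 0 s2
        = limOf R n (x ^ 3 - chainTr R (Nat.zero_le n) r * x ^ 2) := by
      rw [hs2']
      simp only [map_sub, map_pow, map_mul, limOf_f]
    obtain ⟨k1, h01, hn1, he1⟩ := lim_eq_exact hsq
    obtain ⟨k2, h02, hn2, he2⟩ := lim_eq_exact hcb
    -- move everything to level k := max k1 k2
    set k := max k1 k2 with hk
    have hk1 : k1 ≤ k := le_max_left _ _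
    have hk2 : k2 ≤ k := le_max_right _ _
    have hb1 : (chainTr R (hn1.trans hk1) x) ^ 2
          - chainTr R (Nat.zero_le k) r * chainTr R (hn1.trans hk1) x
        = chainTr R (Nat.zero_le k) s1 := by
      have h := congrArg (chainTr R hk1) he1
      simp only [map_sub, map_pow, map_mul, chainTr_trans] at h
      exact h.symm
    have hb2 : (chainTr R (hn1.trans hk1) x) ^ 3
          - chainTr R (Nat.zero_le k) r * (chainTr R (hn1.trans hk1) x) ^ 2
        = chainTr R (Nat.zero_le k) s2 := by
      have h := congrArg (chainTr R hk2) he2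
      simp only [map_sub, map_pow, map_mul, chainTr_trans] at h
      exact h.symm
    obtain ⟨w, hw⟩ := chain_tclosed R k (chainTr R (hn1.trans hk1) x) r
      ⟨s1, hb1.symm⟩ ⟨s2, hb2.symm⟩
    refine ⟨w, ?_⟩
    have hfin : limOf R 0 w = limOf R n x := by
      rw [← limOf_f (Nat.zero_le k) w, hw, limOf_f]
    exact hfin
  · -- reduced
    intro hR
    constructor
    intro x hx
    obtain ⟨m, hm⟩ := hx
    obtain ⟨n, z, rfl⟩ := lim_exists x
    have h0 : limOf R n (z ^ m) = 0 := by rw [map_pow, hm]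
    obtain ⟨l, hl, hl0⟩ := lim_zero_exact h0
    rw [map_pow] at hl0
    have := chain_reduced R hR l
    have hz0 : chainTr R hl z = 0 := this.eq_zero _ ⟨m, hl0⟩
    rw [← limOf_f hl z, hz0, map_zero]
end

section
/- Let R be a commutative ring and N a maximal ideal of the polynomial ring R[X]. The following are equivalent: (1) N ∩ R is a maximal ideal of R; (2) M[X] ⊆ N for some maximal ideal M of R, where M[X] is the ideal of R[X] of polynomials all of whose coefficients lie in M; (3) N contains a monic polynomial. Moreover, if these equivalent conditions hold, then N = M[X] + f(X)·R[X] for some monic polynomial f(X) ∈ N, and M = N ∩ R. -/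
open Polynomial

theorem maximal_ideals_of_polynomial_ring_contracting_to_maximal
    {R : Type*} [CommRing R] (N : Ideal (Polynomial R)) (hN : N.IsMaximal) :
    -- (1) ↔ (2)
    ((N.comap (C : R →+* Polynomial R)).IsMaximal ↔
      ∃ M : Ideal R, M.IsMaximal ∧ M.map (C : R →+* Polynomial R) ≤ N) ∧
    -- (1) ↔ (3)
    ((N.comap (C : R →+* Polynomial R)).IsMaximal ↔ ∃ f ∈ N, Polynomial.Monic f) ∧
    -- moreover, if these conditions hold:
    ((N.comap (C : R →+* Polynomial R)).IsMaximal →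
      -- `N = M[X] + f·R[X]` for some monic `f ∈ N`, with `M = N ∩ R`
      (∃ f : Polynomial R, f.Monic ∧ f ∈ N ∧
        N = (N.comap (C : R →+* Polynomial R)).map (C : R →+* Polynomial R) ⊔
          Ideal.span {f}) ∧
      -- and any maximal `M` with `M[X] ⊆ N` equals `N ∩ R`
      (∀ M : Ideal R, M.IsMaximal → M.map (C : R →+* Polynomial R) ≤ N →
        M = N.comap (C : R →+* Polynomial R))) := by
  -- the contraction `N ∩ R` is a proper ideal
  have hPne : N.comap (C : R →+* Polynomial R) ≠ ⊤ := by
    intro h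
    apply hN.ne_top
    rw [Ideal.eq_top_iff_one] at h ⊢
    simpa using h
  -- uniqueness part: any maximal `M` with `M[X] ⊆ N` equals `N ∩ R`
  have uniq : ∀ M : Ideal R, M.IsMaximal → M.map (C : R →+* Polynomial R) ≤ N →
      M = N.comap (C : R →+* Polynomial R) := by
    intro M hM hle
    exact hM.eq_of_le hPne fun x hx => hle (Ideal.mem_map_of_mem _ hx)
  -- (3) → (1): if `N` contains a monic polynomial then `R[X]/N` is integral over `R`,
  -- and since `R[X]/N` is a field, the contraction is maximal.
  have key3 : (∃ f ∈ N, f.Monic) → (N.comap (C : R →+* Polynomial R)).IsMaximal := by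
    rintro ⟨f, hfN, hf⟩
    have hint : ((Ideal.Quotient.mk N).comp (C : R →+* Polynomial R)).IsIntegral :=
      hf.quotient_isIntegral hfN
    haveI : (⊥ : Ideal ((Polynomial R) ⧸ N)).IsMaximal := by
      letI : Field ((Polynomial R) ⧸ N) := Ideal.Quotient.field N
      exact Ideal.bot_isMaximal
    have := Ideal.isMaximal_comap_of_isIntegral_of_isMaximal'
      ((Ideal.Quotient.mk N).comp (C : R →+* Polynomial R)) hint ⊥
    rwa [← Ideal.comap_comap, ← RingHom.ker, Ideal.mk_ker] at this
  -- the main construction: a monic `f ∈ N` with `N = P[X] ⊔ (f)`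
  have main : (N.comap (C : R →+* Polynomial R)).IsMaximal →
      ∃ f : Polynomial R, f.Monic ∧ f ∈ N ∧
        N = (N.comap (C : R →+* Polynomial R)).map (C : R →+* Polynomial R) ⊔
          Ideal.span {f} := by
    intro hP
    set P : Ideal R := N.comap (C : R →+* Polynomial R) with hPdef
    letI : Field (R ⧸ P) := Ideal.Quotient.field P
    set φ : Polynomial R →+* Polynomial (R ⧸ P) :=
      Polynomial.mapRingHom (Ideal.Quotient.mk P) with hφdef
    have hφsurj : Function.Surjective φ :=
      Polynomial.map_surjective _ Ideal.Quotient.mk_surjective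
    have hker : RingHom.ker φ = P.map (C : R →+* Polynomial R) := by
      rw [hφdef, Polynomial.ker_mapRingHom, Ideal.mk_ker]
    have hkerN : RingHom.ker φ ≤ N := hker ▸ Ideal.map_comap_le
    set N' : Ideal (Polynomial (R ⧸ P)) := N.map φ with hN'def
    -- `N' ≠ ⊥`
    have hN'ne : N' ≠ ⊥ := by
      intro hbot
      have hNeq : N = P.map (C : R →+* Polynomial R) := by
        refine le_antisymm (fun g hg => ?_) Ideal.map_comap_le
        have : φ g ∈ N' := Ideal.mem_map_of_mem _ hg
        rw [hbot] at this
        exact hker ▸ this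
      have hX : (Polynomial.X : Polynomial R) ∉ N := by
        intro hX
        rw [hNeq, Ideal.mem_map_C_iff] at hX
        have := hX 1
        simp at this
        exact hP.ne_top ((Ideal.eq_top_iff_one P).mpr this)
      obtain ⟨y, i, hiN, hyi⟩ := hN.exists_inv hX
      have h0 : i.coeff 0 = 1 := by
        have := congrArg (fun p => Polynomial.coeff p 0) hyi
        simpa [Polynomial.mul_coeff_zero] using this
      rw [hNeq, Ideal.mem_map_C_iff] at hiN
      have := hiN 0
      rw [h0] at this
      exact hP.ne_top ((Ideal.eq_top_iff_one P).mpr this)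
    -- a monic generator of `N'`
    have hprin : N'.IsPrincipal := IsPrincipalIdealRing.principal N'
    set q : Polynomial (R ⧸ P) := Submodule.IsPrincipal.generator N' with hq
    have hqspan : Ideal.span {q} = N' := Ideal.span_singleton_generator N'
    have hqne : q ≠ 0 := by
      intro h0
      rw [h0, Ideal.span_singleton_eq_bot.mpr rfl] at hqspan
      exact hN'ne hqspan.symm
    set q' : Polynomial (R ⧸ P) := q * Polynomial.C q.leadingCoeff⁻¹ with hq'
    have hq'monic : q'.Monic := Polynomial.monic_mul_leadingCoeff_inv hqne
    have hq'span : Ideal.span {q'} = N' := by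
      rw [← hqspan]
      apply Ideal.span_singleton_eq_span_singleton.mpr
      exact (associated_mul_unit_right q _ (IsUnit.map Polynomial.C.toMonoidHom
        (isUnit_iff_ne_zero.mpr (inv_ne_zero (Polynomial.leadingCoeff_ne_zero.mpr hqne))))).symm
    -- lift `q'` to a monic polynomial `f`
    obtain ⟨f, hfmap0, _, hfmonic⟩ := Polynomial.lifts_and_degree_eq_and_monic
      ((Polynomial.mem_lifts _).mpr (hφsurj q')) hq'monic
    have hfmap : φ f = q' := hfmap0
    -- `f ∈ N`
    have hq'N' : q' ∈ N' := hq'span ▸ Ideal.mem_span_singleton_self q'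
    obtain ⟨g, hgN, hgmap⟩ := Ideal.mem_map_iff_of_surjective φ hφsurj |>.mp hq'N'
    have hfN : f ∈ N := by
      have : f - g ∈ RingHom.ker φ := by
        rw [RingHom.mem_ker, map_sub, hfmap, hgmap, sub_self]
      have := hkerN this
      simpa using N.add_mem this hgN
    refine ⟨f, hfmonic, hfN, le_antisymm (fun g hg => ?_) ?_⟩
    · have : φ g ∈ Ideal.span {q'} := hq'span ▸ Ideal.mem_map_of_mem _ hg
      obtain ⟨h', hh'⟩ := Ideal.mem_span_singleton'.mp this
      obtain ⟨h, hhmap⟩ := hφsurj h'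
      have hmem : g - f * h ∈ RingHom.ker φ := by
        rw [RingHom.mem_ker, map_sub, map_mul, hfmap, hhmap, ← hh', mul_comm, sub_self]
      have h1 : g - f * h ∈ P.map (C : R →+* Polynomial R) := hker ▸ hmem
      have h2 : f * h ∈ Ideal.span {f} := Ideal.mem_span_singleton.mpr ⟨h, rfl⟩
      have := Submodule.add_mem_sup h1 h2
      simpa using this
    · exact sup_le Ideal.map_comap_le ((Ideal.span_le).mpr (by simpa using hfN))
  refine ⟨⟨fun h => ⟨_, h, Ideal.map_comap_le⟩, fun ⟨M, hM, hle⟩ => uniq M hM hle ▸ hM⟩,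
    ⟨fun h => (main h).elim fun f hf => ⟨f, hf.2.1, hf.1⟩, key3⟩,
    fun h => ⟨main h, uniq⟩⟩
end
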